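/- arXiv:1810.09670 — 5 statements merged into one kernel-verified Lean document; each statement's English description precedes it below -/
import Mathlib

section
/- For every u ∈ ℝ, the characteristic function of X_t under Q satisfies E_Q[exp(i u X_t)] = exp( t ( i u γ − σ²u²/2 + λ( e^{i u μ − δ²u²/2} − 1 ) ) ). -/
open MeasureTheory ProbabilityTheory

noncomputable section

/-- Codomains of the combined family `(W, N, Y₀, Y₁, …)`:
the first component is the Brownian value (real), the second the Poisson count (natural),
and the remaining ones the jump amplitudes (real). -/
def JDTy : Unit ⊕ Unit ⊕ ℕ → Type
  | Sum.inl _ => ℝ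
  | Sum.inr (Sum.inl _) => ℕ
  | Sum.inr (Sum.inr _) => ℝ

instance JDTy.instMeasurableSpace : ∀ i, MeasurableSpace (JDTy i)
  | Sum.inl _ => inferInstanceAs (MeasurableSpace ℝ)
  | Sum.inr (Sum.inl _) => inferInstanceAs (MeasurableSpace ℕ)
  | Sum.inr (Sum.inr _) => inferInstanceAs (MeasurableSpace ℝ)

/-- The combined family of random variables `(W, N, Y₀, Y₁, …)`. -/
def JDFam {Ω : Type*} (W : Ω → ℝ) (N : Ω → ℕ) (Y : ℕ → Ω → ℝ) : ∀ i, Ω → JDTy i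
  | Sum.inl _ => W
  | Sum.inr (Sum.inl _) => N
  | Sum.inr (Sum.inr j) => Y j

namespace JDAux

lemma measurable_comp_nat {Ω γ : Type*} [MeasurableSpace Ω] [MeasurableSpace γ]
    {N : Ω → ℕ} (hN : Measurable N) {G : ℕ → Ω → γ} (hG : ∀ n, Measurable (G n)) :
    Measurable (fun ω => G (N ω) ω) := by
  intro s hs
  have h : (fun ω => G (N ω) ω) ⁻¹' s = ⋃ n, (G n ⁻¹' s ∩ N ⁻¹' {n}) := by
    ext ω
    simp only [Set.mem_preimage, Set.mem_iUnion, Set.mem_inter_iff, Set.mem_singleton_iff]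
    exact ⟨fun h => ⟨N ω, h, rfl⟩, fun ⟨n, h1, h2⟩ => by rw [h2]; exact h1⟩
  rw [h]
  exact MeasurableSet.iUnion fun n => ((hG n) hs).inter (hN (measurableSet_singleton n))

lemma integral_mul_complex {Ω : Type*} [MeasurableSpace Ω] {Q : Measure Ω}
    {f g : Ω → ℂ} (h : IndepFun f g Q) (hfi : Integrable f Q) (hgi : Integrable g Q) :
    ∫ ω, f ω * g ω ∂Q = (∫ ω, f ω ∂Q) * ∫ ω, g ω ∂Q := by
  have hfr : Integrable (fun ω => (f ω).re) Q := hfi.re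
  have hfi' : Integrable (fun ω => (f ω).im) Q := hfi.im
  have hgr : Integrable (fun ω => (g ω).re) Q := hgi.re
  have hgi' : Integrable (fun ω => (g ω).im) Q := hgi.im
  have hrr : IndepFun (fun ω => (f ω).re) (fun ω => (g ω).re) Q :=
    h.comp Complex.measurable_re Complex.measurable_re
  have hri : IndepFun (fun ω => (f ω).re) (fun ω => (g ω).im) Q :=
    h.comp Complex.measurable_re Complex.measurable_im
  have hir : IndepFun (fun ω => (f ω).im) (fun ω => (g ω).re) Q :=
    h.comp Complex.measurable_im Complex.measurable_re
  have hii : IndepFun (fun ω => (f ω).im) (fun ω => (g ω).im) Q :=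
    h.comp Complex.measurable_im Complex.measurable_im
  have e1 := hrr.integral_fun_mul_eq_mul_integral hfr.1 hgr.1
  have e2 := hri.integral_fun_mul_eq_mul_integral hfr.1 hgi'.1
  have e3 := hir.integral_fun_mul_eq_mul_integral hfi'.1 hgr.1
  have e4 := hii.integral_fun_mul_eq_mul_integral hfi'.1 hgi'.1
  have i1 : Integrable (fun ω => (f ω).re * (g ω).re) Q := hrr.integrable_mul hfr hgr
  have i2 : Integrable (fun ω => (f ω).re * (g ω).im) Q := hri.integrable_mul hfr hgi'
  have i3 : Integrable (fun ω => (f ω).im * (g ω).re) Q := hir.integrable_mul hfi' hgr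
  have i4 : Integrable (fun ω => (f ω).im * (g ω).im) Q := hii.integrable_mul hfi' hgi'
  have key : ∫ ω, f ω * g ω ∂Q
      = ((∫ ω, (f ω).re * (g ω).re ∂Q - ∫ ω, (f ω).im * (g ω).im ∂Q : ℝ) : ℂ)
        + ((∫ ω, (f ω).re * (g ω).im ∂Q + ∫ ω, (f ω).im * (g ω).re ∂Q : ℝ) : ℂ) * Complex.I := by
    have : (fun ω => f ω * g ω)
        = fun ω => (((f ω).re * (g ω).re - (f ω).im * (g ω).im : ℝ) : ℂ)
          + (((f ω).re * (g ω).im + (f ω).im * (g ω).re : ℝ) : ℂ) * Complex.I := by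
      ext ω
      rw [← Complex.re_add_im (f ω), ← Complex.re_add_im (g ω)]
      push_cast
      ring_nf
      simp [Complex.I_sq]
      ring
    have iA : Integrable (fun ω => ((((f ω).re * (g ω).re) - ((f ω).im * (g ω).im) : ℝ) : ℂ)) Q :=
      (i1.sub i4).ofReal
    have iB : Integrable (fun ω =>
        (((((f ω).re * (g ω).im) + ((f ω).im * (g ω).re)) : ℝ) : ℂ) * Complex.I) Q :=
      ((i2.add i3).ofReal).mul_const Complex.I
    have hA : ∫ a, (((f a).re * (g a).re - (f a).im * (g a).im : ℝ) : ℂ) ∂Q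
        = ((∫ a, ((f a).re * (g a).re - (f a).im * (g a).im) ∂Q : ℝ) : ℂ) := integral_ofReal
    have hB : ∫ a, (((f a).re * (g a).im + (f a).im * (g a).re : ℝ) : ℂ) ∂Q
        = ((∫ a, ((f a).re * (g a).im + (f a).im * (g a).re) ∂Q : ℝ) : ℂ) := integral_ofReal
    rw [this, integral_add iA iB, integral_mul_const, hA, hB,
      integral_sub i1 i4, integral_add i2 i3]
  rw [key, ← integral_re_add_im hfi, ← integral_re_add_im hgi]
  simp only [RCLike.I_to_complex, RCLike.re_to_complex, RCLike.im_to_complex]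
  rw [e1, e2, e3, e4]
  push_cast
  ring_nf
  simp [Complex.I_sq]
  ring

lemma iIndepFun_congr_ae {Ω ι : Type*} [MeasurableSpace Ω] {Q : Measure Ω}
    {β : ι → Type*} {m : ∀ i, MeasurableSpace (β i)} {f g : ∀ i, Ω → β i}
    (h : iIndepFun (m := m) f Q) (hfg : ∀ i, f i =ᵐ[Q] g i) : iIndepFun (m := m) g Q := by
  rw [iIndepFun_iff_measure_inter_preimage_eq_mul] at h ⊢
  intro S sets hsets
  have hae : ∀ᵐ ω ∂Q, ∀ i ∈ S, f i ω = g i ω := by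
    rw [Filter.eventually_all_finset]
    exact fun i _ => hfg i
  have h1 : ∀ i ∈ S, Q (g i ⁻¹' sets i) = Q (f i ⁻¹' sets i) := by
    intro i hi
    apply measure_congr
    filter_upwards [hfg i] with ω hω
    simp only [eq_iff_iff]
    show ω ∈ g i ⁻¹' sets i ↔ ω ∈ f i ⁻¹' sets i
    rw [Set.mem_preimage, Set.mem_preimage, hω]
  have h2 : Q (⋂ i ∈ S, g i ⁻¹' sets i) = Q (⋂ i ∈ S, f i ⁻¹' sets i) := by
    apply measure_congr
    filter_upwards [hae] with ω hω
    simp only [eq_iff_iff]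
    show ω ∈ (⋂ i ∈ S, g i ⁻¹' sets i) ↔ ω ∈ (⋂ i ∈ S, f i ⁻¹' sets i)
    simp only [Set.mem_iInter, Set.mem_preimage]
    exact ⟨fun H i hi => by rw [hω i hi]; exact H i hi,
      fun H i hi => by rw [← hω i hi]; exact H i hi⟩
  rw [h2, h (S := S) hsets, Finset.prod_congr rfl h1]

set_option maxHeartbeats 1000000 in
lemma iIndep_integral_prod_complex {Ω ι : Type*} [MeasurableSpace Ω] {Q : Measure Ω}
    [IsProbabilityMeasure Q] {β : ι → Type*} {m : ∀ i, MeasurableSpace (β i)}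
    {f : ∀ i, Ω → β i} (hIndep : iIndepFun (m := m) f Q) (hf : ∀ i, Measurable (f i))
    (φ : ∀ i, β i → ℂ) (hφ : ∀ i, Measurable (φ i)) (hb : ∀ i x, ‖φ i x‖ ≤ 1)
    (s : Finset ι) :
    ∫ ω, ∏ i ∈ s, φ i (f i ω) ∂Q = ∏ i ∈ s, ∫ ω, φ i (f i ω) ∂Q := by
  classical
  have hint : ∀ (s : Finset ι), Integrable (fun ω => ∏ i ∈ s, φ i (f i ω)) Q := by
    intro s
    refine (integrable_const (1 : ℝ)).mono' ?_ ?_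
    · exact (Finset.measurable_prod s fun i _ => (hφ i).comp (hf i)).aestronglyMeasurable
    · refine Filter.Eventually.of_forall fun ω => ?_
      calc ‖∏ i ∈ s, φ i (f i ω)‖ = ∏ i ∈ s, ‖φ i (f i ω)‖ := norm_prod _ _
        _ ≤ ∏ i ∈ s, 1 := Finset.prod_le_prod (fun _ _ => norm_nonneg _) fun i _ => hb i _
        _ = 1 := by simp
  induction s using Finset.induction_on with
  | empty => simp
  | @insert i s his ih =>
    have hd : Disjoint ({i} : Finset ι) s := Finset.disjoint_singleton_left.2 his
    have h1 := hIndep.indepFun_finset {i} s hd hf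
    have h2 : IndepFun (fun ω => φ i (f i ω)) (fun ω => ∏ j ∈ s, φ j (f j ω)) Q := by
      have := h1.comp
        (φ := fun v : ∀ j : ({i} : Finset ι), β j => φ i (v ⟨i, Finset.mem_singleton_self i⟩))
        (ψ := fun v : ∀ j : (s : Finset ι), β j => ∏ j : (s : Finset ι), φ j (v j))
        ((hφ i).comp (measurable_pi_apply _))
        (Finset.measurable_prod Finset.univ fun j _ => (hφ j).comp (measurable_pi_apply j))
      convert this using 2
      · rfl
      rename_i ω
      exact (Finset.prod_coe_sort s fun j => φ j (f j ω)).symm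
    simp only [Finset.prod_insert his]
    rw [← ih]
    exact integral_mul_complex h2 (by
      refine (integrable_const (1 : ℝ)).mono' ((hφ i).comp (hf i)).aestronglyMeasurable
        (Filter.Eventually.of_forall fun ω => hb i _)) (hint s)

open Real in
lemma gauss_char (m : ℝ) {v : NNReal} (hv : v ≠ 0) (a : ℝ) :
    ∫ x, Complex.exp (Complex.I * a * x) ∂(gaussianReal m v)
      = Complex.exp (Complex.I * a * m - v * a ^ 2 / 2) := by
  have hv0 : (0:ℝ) < (v:ℝ) := lt_of_le_of_ne (v.coe_nonneg) (by exact_mod_cast (Ne.symm hv))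
  have hvR : ((v:ℝ):ℂ) ≠ 0 := by exact_mod_cast hv0.ne'
  rw [gaussianReal_of_var_ne_zero m hv]
  have hpdf : gaussianPDF m v = fun x => ((gaussianPDFReal m v x).toNNReal : ENNReal) := rfl
  rw [hpdf, integral_withDensity_eq_integral_smul
    ((measurable_gaussianPDFReal m v).real_toNNReal) _]
  set b : ℂ := ((-(2 * (v:ℝ))⁻¹ : ℝ) : ℂ) with hb_def
  set c : ℂ := Complex.I * a + (m / v : ℝ) with hc_def
  set d : ℂ := ((-(m ^ 2) / (2 * v) : ℝ) : ℂ) with hd_def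
  have hb : b.re < 0 := by
    simp only [hb_def, Complex.ofReal_re]
    rw [neg_lt, neg_zero]
    positivity
  have hpoint : (fun x : ℝ => (gaussianPDFReal m v x).toNNReal • Complex.exp (Complex.I * a * x))
      = fun x : ℝ => ((Real.sqrt (2 * π * v))⁻¹ : ℂ) * Complex.exp (b * x ^ 2 + c * x + d) := by
    ext x
    have h1 : ((gaussianPDFReal m v x).toNNReal : ℝ) = gaussianPDFReal m v x :=
      Real.coe_toNNReal _ (gaussianPDFReal_nonneg m v x)
    rw [NNReal.smul_def, h1, gaussianPDFReal, Complex.real_smul]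
    push_cast
    rw [mul_assoc, ← Complex.exp_add]
    congr 2
    rw [hb_def, hc_def, hd_def]
    push_cast
    field_simp [hvR]
    ring
  rw [hpoint, integral_const_mul, integral_cexp_quadratic hb c d]
  have h3 : (↑π / -b) = ((2 * π * (v:ℝ) : ℝ) : ℂ) := by
    rw [hb_def]
    push_cast
    rw [neg_neg]
    field_simp
  have h4 : ((2 * π * (v:ℝ) : ℝ) : ℂ) ^ ((1:ℂ)/2) = (Real.sqrt (2 * π * (v:ℝ)) : ℂ) := by
    have h2v : (0:ℝ) ≤ 2 * π * v := by positivity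
    rw [show ((1:ℂ)/2) = (((1/2 : ℝ)):ℂ) by norm_num, ← Complex.ofReal_cpow h2v,
      ← Real.sqrt_eq_rpow]
  have h5 : d - c ^ 2 / (4 * b) = Complex.I * a * m - (v:ℝ) * a ^ 2 / 2 := by
    rw [hb_def, hc_def, hd_def]
    push_cast
    field_simp [hvR]
    ring_nf
    simp [Complex.I_sq]
    ring
  rw [h3, h4, h5, ← mul_assoc]
  have hsq : (Real.sqrt (2 * π * (v:ℝ)) : ℂ) ≠ 0 := by
    have : (0:ℝ) < Real.sqrt (2 * π * v) := Real.sqrt_pos.2 (by positivity)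
    exact_mod_cast this.ne'
  rw [inv_mul_cancel₀ hsq, one_mul]

/-- The factor functions used in the independence argument. -/
def phiFam (u σ : ℝ) (n : ℕ) : ∀ i, JDTy i → ℂ
  | Sum.inl _ => fun x : ℝ => Complex.exp (Complex.I * u * σ * x)
  | Sum.inr (Sum.inl _) => fun k : ℕ => if k = n then 1 else 0
  | Sum.inr (Sum.inr _) => fun y : ℝ => Complex.exp (Complex.I * u * y)

lemma phiFam_measurable (u σ : ℝ) (n : ℕ) : ∀ i, Measurable (phiFam u σ n i) := by
  rintro (⟨⟩ | ⟨⟩ | j)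
  · exact Complex.measurable_exp.comp (Complex.measurable_ofReal.const_mul _)
  · exact measurable_of_countable (α := ℕ) _
  · exact Complex.measurable_exp.comp (Complex.measurable_ofReal.const_mul _)

lemma norm_exp_I_mul_le_one (z : ℝ) (x : ℝ) : ‖Complex.exp (Complex.I * z * x)‖ ≤ 1 := by
  rw [Complex.norm_exp]
  simp [Complex.mul_re, Complex.mul_im]

lemma phiFam_norm_le (u σ : ℝ) (n : ℕ) : ∀ i x, ‖phiFam u σ n i x‖ ≤ 1 := by
  rintro (⟨⟩ | ⟨⟩ | j) x
  · simpa [phiFam, mul_assoc] using norm_exp_I_mul_le_one (u * σ) x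
  · simp only [phiFam]
    split <;> simp
  · exact norm_exp_I_mul_le_one u x


set_option maxHeartbeats 2000000 in
lemma key {Ω : Type*} [MeasurableSpace Ω] (Q : Measure Ω) [IsProbabilityMeasure Q]
    (γ μ σ δ lam t : ℝ) (hσ : 0 < σ) (hδ : 0 < δ) (hlam : 0 < lam) (ht : 0 < t)
    (W : Ω → ℝ) (N : Ω → ℕ) (Y : ℕ → Ω → ℝ)
    (hWm : Measurable W) (hNm : Measurable N) (hYm : ∀ j, Measurable (Y j))
    (hW : Measure.map W Q = gaussianReal 0 t.toNNReal)
    (hN : Measure.map N Q = poissonMeasure (lam * t).toNNReal)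
    (hY : ∀ j, Measure.map (Y j) Q = gaussianReal μ (δ ^ 2).toNNReal)
    (hIndep : iIndepFun (m := JDTy.instMeasurableSpace) (JDFam W N Y) Q)
    (u : ℝ) :
    ∫ ω, Complex.exp (Complex.I * u *
        ((γ * t + σ * W ω + ∑ j ∈ Finset.range (N ω), Y j ω : ℝ))) ∂Q
      = Complex.exp ((t : ℂ) * (Complex.I * u * γ - (σ : ℂ) ^ 2 * u ^ 2 / 2
          + (lam : ℂ) * (Complex.exp (Complex.I * u * μ - (δ : ℂ) ^ 2 * u ^ 2 / 2) - 1))) := by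
  classical
  set r : ℝ := lam * t with hr_def
  set φc : ℂ := Complex.exp (Complex.I * u * μ - (δ:ℂ)^2 * u^2/2) with hφc_def
  set A : ℂ := Complex.exp (-((t:ℂ) * ((u:ℂ) * σ)^2 / 2)) with hA_def
  have hfm : ∀ i, Measurable (JDFam W N Y i) := by
    rintro (⟨⟩ | ⟨⟩ | j)
    exacts [hWm, hNm, hYm j]
  have htNN : (t.toNNReal : ℝ) = t := Real.coe_toNNReal t ht.le
  have hδNN : (((δ^2).toNNReal) : ℝ) = δ^2 := Real.coe_toNNReal _ (sq_nonneg δ)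
  have hrNN : ((r.toNNReal) : ℝ) = r := Real.coe_toNNReal _ (by positivity)
  have htv : t.toNNReal ≠ 0 := by
    simp only [ne_eq, Real.toNNReal_eq_zero, not_le]
    exact ht
  have hδv : (δ^2).toNNReal ≠ 0 := by
    simp only [ne_eq, Real.toNNReal_eq_zero, not_le]
    positivity
  -- the three one-dimensional expectations
  have hE1 : ∫ ω, Complex.exp (Complex.I * u * σ * (W ω)) ∂Q = A := by
    have hmeas : AEStronglyMeasurable (fun x : ℝ =>
        Complex.exp (Complex.I * ((u*σ : ℝ):ℂ) * (x:ℂ))) (Measure.map W Q) :=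
      (Complex.measurable_exp.comp (Complex.measurable_ofReal.const_mul _)).aestronglyMeasurable
    have h0 : (fun ω => Complex.exp (Complex.I * u * σ * (W ω)))
        = fun ω => Complex.exp (Complex.I * ((u*σ : ℝ):ℂ) * ((W ω : ℝ):ℂ)) := by
      ext ω
      push_cast
      ring_nf
    rw [h0, ← integral_map hWm.aemeasurable hmeas, hW, gauss_char 0 htv (u*σ)]
    rw [hA_def]
    congr 1
    have hco : ((t.toNNReal : ℝ) : ℂ) = (t : ℂ) := by rw [htNN]
    rw [hco]
    push_cast
    ring
  have hE3 : ∀ j, ∫ ω, Complex.exp (Complex.I * u * (Y j ω)) ∂Q = φc := by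
    intro j
    have hmeas : AEStronglyMeasurable (fun x : ℝ =>
        Complex.exp (Complex.I * (u:ℂ) * (x:ℂ))) (Measure.map (Y j) Q) :=
      (Complex.measurable_exp.comp (Complex.measurable_ofReal.const_mul _)).aestronglyMeasurable
    rw [show (fun ω => Complex.exp (Complex.I * u * (Y j ω)))
        = fun ω => (fun x : ℝ => Complex.exp (Complex.I * (u:ℂ) * (x:ℂ))) (Y j ω) from rfl,
      ← integral_map (hYm j).aemeasurable hmeas, hY j, gauss_char μ hδv u]
    rw [hφc_def]
    congr 1
    have hco : (((δ^2).toNNReal : ℝ) : ℂ) = ((δ:ℂ))^2 := by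
      rw [hδNN]
      push_cast
      ring
    rw [hco]
  have hE2 : ∀ n, ∫ ω, (if N ω = n then (1:ℂ) else 0) ∂Q
      = ((poissonPMFReal r.toNNReal n : ℝ) : ℂ) := by
    intro n
    have hs : MeasurableSet (N ⁻¹' {n}) := hNm (measurableSet_singleton n)
    have hind : (fun ω => (if N ω = n then (1:ℂ) else 0))
        = Set.indicator (N ⁻¹' {n}) (fun _ => (1:ℂ)) := by
      ext ω
      simp [Set.indicator_apply]
    rw [hind, integral_indicator hs, setIntegral_const]
    have hmap : Q (N ⁻¹' {n}) = poissonMeasure r.toNNReal {n} := by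
      rw [← hN, Measure.map_apply hNm (measurableSet_singleton n)]
    rw [Measure.real, hmap, poissonMeasure_singleton]
    show (ENNReal.ofReal (poissonPMFReal r.toNNReal n)).toReal • (1:ℂ) = _
    rw [ENNReal.toReal_ofReal poissonPMFReal_nonneg]
    simp [Complex.real_smul]
  -- the partition of Ω according to the value of N
  set s : ℕ → Set Ω := fun n => N ⁻¹' {n} with hs_def
  have hsm : ∀ n, MeasurableSet (s n) := fun n => hNm (measurableSet_singleton n)
  have hsd : Pairwise (Function.onFun Disjoint s) := by
    intro a b hab
    refine Set.disjoint_left.mpr fun ω hωa hωb => hab ?_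
    simp only [hs_def, Set.mem_preimage, Set.mem_singleton_iff] at hωa hωb
    rw [← hωa, ← hωb]
  have hsu : (⋃ n, s n) = Set.univ := by
    ext ω
    simp [hs_def]
  -- the main integrand (after removing the constant drift factor)
  set F : Ω → ℂ := fun ω => Complex.exp (Complex.I * u * σ * W ω)
      * ∏ j ∈ Finset.range (N ω), Complex.exp (Complex.I * u * Y j ω) with hF_def
  have hWpart : Measurable fun ω => Complex.exp (Complex.I * (u:ℂ) * σ * (W ω : ℂ)) :=
    Complex.measurable_exp.comp ((Complex.measurable_ofReal.comp hWm).const_mul _)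
  have hFmeas : Measurable F := by
    refine Measurable.mul hWpart ?_
    exact measurable_comp_nat hNm (G := fun n ω => ∏ j ∈ Finset.range n,
      Complex.exp (Complex.I * u * Y j ω)) fun n =>
      Finset.measurable_prod (Finset.range n) fun j _ =>
        Complex.measurable_exp.comp ((Complex.measurable_ofReal.comp (hYm j)).const_mul _)
  have hexp1 : ∀ ω, ‖Complex.exp (Complex.I * (u:ℂ) * σ * (W ω : ℂ))‖ ≤ 1 := by
    intro ω
    have := norm_exp_I_mul_le_one (u * σ) (W ω)
    simpa [mul_assoc] using this
  have hFle : ∀ ω, ‖F ω‖ ≤ 1 := by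
    intro ω
    rw [hF_def]
    calc ‖Complex.exp (Complex.I * u * σ * W ω)
          * ∏ j ∈ Finset.range (N ω), Complex.exp (Complex.I * u * Y j ω)‖
        = ‖Complex.exp (Complex.I * u * σ * W ω)‖
          * ∏ j ∈ Finset.range (N ω), ‖Complex.exp (Complex.I * u * Y j ω)‖ := by
          rw [norm_mul, norm_prod]
      _ ≤ 1 * ∏ j ∈ Finset.range (N ω), 1 := by
          refine mul_le_mul (hexp1 ω) ?_ ?_ zero_le_one
          · exact Finset.prod_le_prod (fun _ _ => norm_nonneg _)
              fun j _ => norm_exp_I_mul_le_one u (Y j ω)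
          · exact Finset.prod_nonneg fun _ _ => norm_nonneg _
      _ = 1 := by simp
  have hFint : Integrable F Q :=
    (integrable_const (1:ℝ)).mono' hFmeas.aestronglyMeasurable (.of_forall hFle)
  -- split off the drift
  have hLHS : ∫ ω, Complex.exp (Complex.I * u *
      ((γ * t + σ * W ω + ∑ j ∈ Finset.range (N ω), Y j ω : ℝ))) ∂Q
      = Complex.exp (Complex.I * u * ((γ * t : ℝ) : ℂ)) * ∫ ω, F ω ∂Q := by
    rw [← integral_const_mul]
    congr 1
    ext ω
    rw [hF_def]
    dsimp only
    rw [← Complex.exp_sum, ← Complex.exp_add, ← Complex.exp_add]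
    congr 1
    push_cast
    rw [mul_add, mul_add, Finset.mul_sum]
    ring
  -- the finite index sets
  set emb : ℕ → Unit ⊕ Unit ⊕ ℕ := fun j => Sum.inr (Sum.inr j) with hemb_def
  set sFin : ℕ → Finset (Unit ⊕ Unit ⊕ ℕ) := fun n =>
    insert (Sum.inl ()) (insert (Sum.inr (Sum.inl ())) ((Finset.range n).image emb)) with hsFin_def
  have hterm : ∀ n, ∫ ω in s n, F ω ∂Q
      = A * (((poissonPMFReal r.toNNReal n : ℝ):ℂ) * φc ^ n) := by
    intro n
    have hi0 : (Sum.inl () : Unit ⊕ Unit ⊕ ℕ)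
        ∉ insert (Sum.inr (Sum.inl ())) ((Finset.range n).image emb) := by
      simp [hemb_def]
    have hi1 : (Sum.inr (Sum.inl ()) : Unit ⊕ Unit ⊕ ℕ) ∉ (Finset.range n).image emb := by
      simp [hemb_def]
    have hinj : ∀ x ∈ Finset.range n, ∀ y ∈ Finset.range n, emb x = emb y → x = y := by
      intro x _ y _ h
      simpa [hemb_def] using h
    have hprodFin : ∀ ω, ∏ i ∈ sFin n, phiFam u σ n i (JDFam W N Y i ω)
        = (if N ω = n then (1:ℂ) else 0) * (Complex.exp (Complex.I * u * σ * W ω)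
            * ∏ j ∈ Finset.range n, Complex.exp (Complex.I * u * Y j ω)) := by
      intro ω
      rw [hsFin_def]
      rw [Finset.prod_insert hi0, Finset.prod_insert hi1, Finset.prod_image hinj]
      simp only [phiFam, JDFam, hemb_def, emb]
      exact mul_left_comm _ _ _
    have e1 : ∫ ω in s n, F ω ∂Q
        = ∫ ω in s n, Complex.exp (Complex.I * u * σ * W ω)
            * ∏ j ∈ Finset.range n, Complex.exp (Complex.I * u * Y j ω) ∂Q := by
      refine setIntegral_congr_fun (hsm n) fun ω hω => ?_
      have hωn : N ω = n := by
        simpa [hs_def, Set.mem_preimage, Set.mem_singleton_iff] using hω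
      rw [hF_def]
      dsimp only
      rw [hωn]
    have e2 : ∫ ω in s n, Complex.exp (Complex.I * u * σ * W ω)
          * ∏ j ∈ Finset.range n, Complex.exp (Complex.I * u * Y j ω) ∂Q
        = ∫ ω, ∏ i ∈ sFin n, phiFam u σ n i (JDFam W N Y i ω) ∂Q := by
      rw [← integral_indicator (hsm n)]
      congr 1
      ext ω
      rw [hprodFin ω]
      by_cases hω : N ω = n <;>
        simp [Set.indicator_apply, hs_def, hω]
    have e3 := iIndep_integral_prod_complex hIndep hfm (phiFam u σ n)
      (phiFam_measurable u σ n) (phiFam_norm_le u σ n) (sFin n)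
    have e4 : ∏ i ∈ sFin n, ∫ ω, phiFam u σ n i (JDFam W N Y i ω) ∂Q
        = A * (((poissonPMFReal r.toNNReal n : ℝ):ℂ) * φc ^ n) := by
      rw [hsFin_def]
      rw [Finset.prod_insert hi0, Finset.prod_insert hi1, Finset.prod_image hinj]
      have c1 : ∫ ω, phiFam u σ n (Sum.inl ()) (JDFam W N Y (Sum.inl ()) ω) ∂Q = A := by
        simpa only [phiFam, JDFam] using hE1
      have c2 : ∫ ω, phiFam u σ n (Sum.inr (Sum.inl ()))
          (JDFam W N Y (Sum.inr (Sum.inl ())) ω) ∂Q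
          = ((poissonPMFReal r.toNNReal n : ℝ) : ℂ) := by
        simp only [phiFam, JDFam]
        exact hE2 n
      have c3 : ∀ j, ∫ ω, phiFam u σ n (emb j) (JDFam W N Y (emb j) ω) ∂Q = φc := by
        intro j
        simpa only [phiFam, JDFam, hemb_def] using hE3 j
      rw [c1, c2, Finset.prod_congr rfl fun j _ => c3 j]
      simp [Finset.prod_const, Finset.card_range]
    rw [e1, e2, e3, e4]
  have hHS1 : HasSum (fun n => ∫ ω in s n, F ω ∂Q) (∫ ω, F ω ∂Q) := by
    have h := hasSum_integral_iUnion hsm hsd (hFint.integrableOn)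
    rwa [hsu, Measure.restrict_univ] at h
  have hbase : HasSum (fun n : ℕ => ((r:ℂ) * φc)^n / n.factorial)
      (Complex.exp ((r:ℂ) * φc)) := by
    rw [Complex.exp_eq_exp_ℂ]
    exact NormedSpace.expSeries_div_hasSum_exp _
  have hHS2 := hbase.mul_left (A * ((Real.exp (-r) : ℝ) : ℂ))
  have hfun : (fun n : ℕ => A * ((Real.exp (-r) : ℝ) : ℂ) * (((r:ℂ) * φc)^n / n.factorial))
      = fun n => ∫ ω in s n, F ω ∂Q := by
    ext n
    rw [hterm n]
    have hp : (poissonPMFReal r.toNNReal n : ℝ)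
        = Real.exp (-r) * r ^ n / n.factorial := by
      rw [poissonPMFReal, hrNN]
    rw [hp]
    have hfac : ((n.factorial : ℝ) : ℂ) ≠ 0 := by
      exact_mod_cast Nat.cast_ne_zero.mpr n.factorial_ne_zero
    push_cast
    rw [mul_pow]
    field_simp
  rw [hfun] at hHS2
  have hint_eq : ∫ ω, F ω ∂Q
      = A * ((Real.exp (-r) : ℝ) : ℂ) * Complex.exp ((r:ℂ) * φc) := hHS1.unique hHS2
  rw [hLHS, hint_eq, hA_def, Complex.ofReal_exp, ← Complex.exp_add, ← Complex.exp_add,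
    ← Complex.exp_add]
  rw [hφc_def]
  congr 1
  rw [hr_def]
  push_cast
  ring

end JDAux

/-- characteristic function of the jump-diffusion Lévy increment with
normally distributed jump amplitudes. -/
theorem stmt0 {Ω : Type*} [MeasurableSpace Ω] (Q : Measure Ω) [IsProbabilityMeasure Q]
    (γ μ σ δ lam t : ℝ) (hσ : 0 < σ) (hδ : 0 < δ) (hlam : 0 < lam) (ht : 0 < t)
    (W : Ω → ℝ) (N : Ω → ℕ) (Y : ℕ → Ω → ℝ)
    (hW : Measure.map W Q = gaussianReal 0 t.toNNReal)
    (hN : Measure.map N Q = poissonMeasure (lam * t).toNNReal)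
    (hY : ∀ j, Measure.map (Y j) Q = gaussianReal μ (δ ^ 2).toNNReal)
    (hIndep : iIndepFun (m := JDTy.instMeasurableSpace) (JDFam W N Y) Q)
    (X : Ω → ℝ) (hX : ∀ ω, X ω = γ * t + σ * W ω + ∑ j ∈ Finset.range (N ω), Y j ω)
    (u : ℝ) :
    ∫ ω, Complex.exp (Complex.I * u * X ω) ∂Q
      = Complex.exp ((t : ℂ) * (Complex.I * u * γ - (σ : ℂ) ^ 2 * u ^ 2 / 2
          + (lam : ℂ) * (Complex.exp (Complex.I * u * μ - (δ : ℂ) ^ 2 * u ^ 2 / 2) - 1))) := by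
  classical
  have hWae : AEMeasurable W Q := by
    by_contra h
    have h2 := hW
    rw [Measure.map_of_not_aemeasurable h] at h2
    exact (IsProbabilityMeasure.ne_zero (gaussianReal 0 t.toNNReal)) h2.symm
  have hNae : AEMeasurable N Q := by
    by_contra h
    have h2 := hN
    rw [Measure.map_of_not_aemeasurable h] at h2
    exact (IsProbabilityMeasure.ne_zero (poissonMeasure (lam * t).toNNReal)) h2.symm
  have hYae : ∀ j, AEMeasurable (Y j) Q := by
    intro j
    by_contra h
    have h2 := hY j
    rw [Measure.map_of_not_aemeasurable h] at h2
    exact (IsProbabilityMeasure.ne_zero (gaussianReal μ (δ ^ 2).toNNReal)) h2.symm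
  set W' : Ω → ℝ := hWae.mk W with hW'_def
  set N' : Ω → ℕ := hNae.mk N with hN'_def
  set Y' : ℕ → Ω → ℝ := fun j => (hYae j).mk (Y j) with hY'_def
  have hWeq : W =ᵐ[Q] W' := hWae.ae_eq_mk
  have hNeq : N =ᵐ[Q] N' := hNae.ae_eq_mk
  have hYeq : ∀ j, Y j =ᵐ[Q] Y' j := fun j => (hYae j).ae_eq_mk
  have hW'm : Measurable W' := hWae.measurable_mk
  have hN'm : Measurable N' := hNae.measurable_mk
  have hY'm : ∀ j, Measurable (Y' j) := fun j => (hYae j).measurable_mk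
  have hfam : ∀ i, JDFam W N Y i =ᵐ[Q] JDFam W' N' Y' i := by
    rintro (⟨⟩ | ⟨⟩ | j)
    exacts [hWeq, hNeq, hYeq j]
  have hIndep' : iIndepFun (m := JDTy.instMeasurableSpace) (JDFam W' N' Y') Q :=
    JDAux.iIndepFun_congr_ae hIndep hfam
  have hW' : Measure.map W' Q = gaussianReal 0 t.toNNReal := by
    rw [← Measure.map_congr hWeq]
    exact hW
  have hN' : Measure.map N' Q = poissonMeasure (lam * t).toNNReal := by
    rw [← Measure.map_congr hNeq]
    exact hN
  have hY' : ∀ j, Measure.map (Y' j) Q = gaussianReal μ (δ ^ 2).toNNReal := by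
    intro j
    rw [← Measure.map_congr (hYeq j)]
    exact hY j
  have hint_eq : ∫ ω, Complex.exp (Complex.I * u * X ω) ∂Q
      = ∫ ω, Complex.exp (Complex.I * u *
          ((γ * t + σ * W' ω + ∑ j ∈ Finset.range (N' ω), Y' j ω : ℝ))) ∂Q := by
    apply integral_congr_ae
    filter_upwards [hWeq, hNeq, ae_all_iff.2 fun j => hYeq j] with ω h1 h2 h3
    rw [hX ω, h1, h2]
    have hsum : (∑ j ∈ Finset.range (N' ω), Y j ω) = ∑ j ∈ Finset.range (N' ω), Y' j ω :=
      Finset.sum_congr rfl fun j _ => h3 j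
    rw [hsum]
  rw [hint_eq]
  exact JDAux.key Q γ μ σ δ lam t hσ hδ hlam ht W' N' Y' hW'm hN'm hY'm hW' hN' hY' hIndep' u

end
end

section
/- For every Borel set A ⊆ ℝ, Q(X_t ∈ A) = ∫_A e^{−λt} Σ_{m=0}^∞ ( (λt)^m / ( m! √(2π(σ²t + mδ²)) ) ) · exp( −(x − γt − mμ)² / (2(σ²t + mδ²)) ) dx. -/
open MeasureTheory ProbabilityTheory Real
open scoped NNReal ENNReal

noncomputable section

/-- Standard normal cumulative distribution function Φ. -/
def stdNormCDF (x : ℝ) : ℝ :=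
  ∫ u in Set.Iic x, (Real.sqrt (2 * Real.pi))⁻¹ * Real.exp (-u ^ 2 / 2)


open scoped NNReal ENNReal

lemma gauss_exp_identity (a b z y : ℝ) {v w : ℝ} (hv : 0 < v) (hw : 0 < w) :
    - (z - y - a)^2 / (2 * v) + - (y - b)^2 / (2 * w)
      = - (z - (a + b))^2 / (2 * (v + w))
        + - (y - (w * (z - a) + v * b) / (v + w))^2 / (2 * (v * w / (v + w))) := by
  have hv' : v ≠ 0 := hv.ne'
  have hw' : w ≠ 0 := hw.ne'
  have hvw : v + w ≠ 0 := by positivity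
  field_simp
  ring

lemma gauss_conv_pdf (a b : ℝ) {v w : ℝ≥0} (hv : v ≠ 0) (hw : w ≠ 0) (z : ℝ) :
    ∫ y, gaussianPDFReal a v (z - y) * gaussianPDFReal b w y
      = gaussianPDFReal (a + b) (v + w) z := by
  have hv0 : (0:ℝ) < v := by positivity
  have hw0 : (0:ℝ) < w := by positivity
  have hvw0 : (0:ℝ) < (v:ℝ) + w := by positivity
  set u : ℝ≥0 := v * w / (v + w) with hu_def
  have hu0 : u ≠ 0 := by
    simp only [hu_def, ne_eq, div_eq_zero_iff, mul_eq_zero]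
    push_neg
    exact ⟨⟨hv, hw⟩, by simp [hv, hw]⟩
  have hucoe : (u : ℝ) = v * w / (v + w) := by
    rw [hu_def]
    push_cast [NNReal.coe_div]
    ring
  set c : ℝ := ((w:ℝ) * (z - a) + v * b) / (v + w) with hc_def
  have key : ∀ y, gaussianPDFReal a v (z - y) * gaussianPDFReal b w y
      = gaussianPDFReal (a + b) (v + w) z * gaussianPDFReal c u y := by
    intro y
    simp only [gaussianPDFReal]
    rw [mul_mul_mul_comm, ← Real.exp_add, mul_mul_mul_comm _ _ _ (rexp _), ← Real.exp_add]
    have hconst : (√(2 * π * v))⁻¹ * (√(2 * π * w))⁻¹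
        = (√(2 * π * ((v:ℝ) + w)))⁻¹ * (√(2 * π * u))⁻¹ := by
      rw [← mul_inv, ← mul_inv, ← Real.sqrt_mul (by positivity), ← Real.sqrt_mul (by positivity)]
      congr 1
      rw [hucoe]
      field_simp
    have hexp : - (z - y - a)^2 / (2 * v) + - (y - b)^2 / (2 * w)
        = - (z - (a + b))^2 / (2 * ((v:ℝ) + w)) + - (y - c)^2 / (2 * (u:ℝ)) := by
      rw [hucoe, hc_def]
      exact gauss_exp_identity a b z y hv0 hw0
    push_cast at hexp ⊢
    rw [hconst, hexp]
  simp_rw [key]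
  rw [integral_const_mul, integral_gaussianPDFReal_eq_one c hu0, mul_one]

lemma gaussianPDFReal_le (b : ℝ) (w : ℝ≥0) (x : ℝ) :
    gaussianPDFReal b w x ≤ (√(2 * π * w))⁻¹ := by
  rw [gaussianPDFReal]
  calc (√(2 * π * w))⁻¹ * rexp (- (x - b)^2 / (2 * w))
      ≤ (√(2 * π * w))⁻¹ * 1 := by
        gcongr
        exact Real.exp_le_one_iff.mpr (div_nonpos_of_nonpos_of_nonneg (by simp [sq_nonneg]) (by positivity))
    _ = _ := mul_one _

lemma integrable_gauss_mul (b a : ℝ) (w v : ℝ≥0) (z : ℝ) :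
    Integrable (fun x ↦ gaussianPDFReal a v x * gaussianPDFReal b w (z - x)) := by
  have hmeas : AEStronglyMeasurable (fun x ↦ gaussianPDFReal b w (z - x)) volume :=
    ((measurable_gaussianPDFReal b w).comp (measurable_const.sub measurable_id)).aestronglyMeasurable
  have h := (integrable_gaussianPDFReal a v).bdd_mul hmeas
    (c := (√(2 * π * w))⁻¹) (ae_of_all _ fun x ↦ by
      rw [Real.norm_eq_abs, abs_of_nonneg (gaussianPDFReal_nonneg _ _ _)]
      exact gaussianPDFReal_le b w _)
  simpa [mul_comm] using h

lemma gauss_conv_lintegral (a b : ℝ) {v w : ℝ≥0} (hv : v ≠ 0) (hw : w ≠ 0) (z : ℝ) :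
    ∫⁻ x, gaussianPDF a v x * gaussianPDF b w (z - x) = gaussianPDF (a + b) (v + w) z := by
  simp only [gaussianPDF]
  simp_rw [← ENNReal.ofReal_mul (gaussianPDFReal_nonneg _ _ _)]
  rw [← ofReal_integral_eq_lintegral_ofReal (integrable_gauss_mul b a w v z)
      (ae_of_all _ fun x ↦ mul_nonneg (gaussianPDFReal_nonneg _ _ _) (gaussianPDFReal_nonneg _ _ _))]
  congr 1
  calc ∫ x, gaussianPDFReal a v x * gaussianPDFReal b w (z - x)
      = ∫ x, gaussianPDFReal b w (z - x) * gaussianPDFReal a v x := by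
        simp_rw [mul_comm]
  _ = gaussianPDFReal (b + a) (w + v) z := gauss_conv_pdf b a hw hv z
  _ = gaussianPDFReal (a + b) (v + w) z := by rw [add_comm a, add_comm v]

lemma map_add_gaussian {Ω : Type*} [MeasurableSpace Ω] (Q : Measure Ω) [IsProbabilityMeasure Q]
    {U V : Ω → ℝ} (hU : Measurable U) (hV : Measurable V) (hind : IndepFun U V Q)
    {a b : ℝ} {v w : ℝ≥0} (hv : v ≠ 0) (hw : w ≠ 0)
    (hUl : Measure.map U Q = gaussianReal a v) (hVl : Measure.map V Q = gaussianReal b w) :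
    Measure.map (fun ω ↦ U ω + V ω) Q = gaussianReal (a + b) (v + w) := by
  have hpair : Measure.map (fun ω ↦ (U ω, V ω)) Q
      = (gaussianReal a v).prod (gaussianReal b w) := by
    rw [← hUl, ← hVl]
    exact (indepFun_iff_map_prod_eq_prod_map_map hU.aemeasurable hV.aemeasurable).mp hind
  have hmap : Measure.map (fun ω ↦ U ω + V ω) Q
      = Measure.map (fun p : ℝ × ℝ ↦ p.1 + p.2) ((gaussianReal a v).prod (gaussianReal b w)) := by
    rw [← hpair, Measure.map_map (show Measurable (fun p : ℝ × ℝ ↦ p.1 + p.2) from measurable_fst.add measurable_snd) (hU.prodMk hV)]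
    rfl
  rw [hmap, gaussianReal_of_var_ne_zero _ hv, gaussianReal_of_var_ne_zero _ hw,
    gaussianReal_of_var_ne_zero _ (by simp [hv, hw])]
  ext s hs
  rw [Measure.map_apply (show Measurable (fun p : ℝ × ℝ ↦ p.1 + p.2) from measurable_fst.add measurable_snd) hs,
    withDensity_apply _ hs]
  have hsadd : MeasurableSet ((fun p : ℝ × ℝ ↦ p.1 + p.2) ⁻¹' s) :=
    (measurable_fst.add measurable_snd) hs
  rw [Measure.prod_apply hsadd]
  have h1 : ∀ x : ℝ, (volume.withDensity (gaussianPDF b w)) (Prod.mk x ⁻¹' ((fun p : ℝ × ℝ ↦ p.1 + p.2) ⁻¹' s))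
      = ∫⁻ z, s.indicator 1 z * gaussianPDF b w (z - x) := by
    intro x
    have hmeas : MeasurableSet ((fun y ↦ x + y) ⁻¹' s) := (measurable_const_add x) hs
    have hpre : (Prod.mk x ⁻¹' ((fun p : ℝ × ℝ ↦ p.1 + p.2) ⁻¹' s)) = (fun y ↦ x + y) ⁻¹' s := rfl
    rw [hpre, withDensity_apply _ hmeas, ← lintegral_indicator hmeas]
    have hptw : ∀ y : ℝ, ((fun y ↦ x + y) ⁻¹' s).indicator (gaussianPDF b w) y
        = s.indicator 1 (x + y) * gaussianPDF b w ((x + y) - x) := by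
      intro y
      by_cases hy : x + y ∈ s
      · rw [Set.indicator_of_mem (by exact hy), Set.indicator_of_mem hy]
        simp
      · rw [Set.indicator_of_notMem (by exact hy), Set.indicator_of_notMem hy, zero_mul]
    simp_rw [hptw]
    exact lintegral_add_left_eq_self (fun z ↦ s.indicator 1 z * gaussianPDF b w (z - x)) x
  simp_rw [h1]
  have hF : Measurable (Function.uncurry fun x z ↦ s.indicator (1 : ℝ → ℝ≥0∞) z * gaussianPDF b w (z - x)) := by
    apply Measurable.mul
    · exact (measurable_indicator_const_iff 1 |>.mpr hs).comp measurable_snd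
    · exact (measurable_gaussianPDF b w).comp (measurable_snd.sub measurable_fst)
  rw [lintegral_withDensity_eq_lintegral_mul _ (measurable_gaussianPDF a v)
    (Measurable.lintegral_prod_right hF)]
  simp only [Pi.mul_apply]
  calc ∫⁻ x, gaussianPDF a v x * ∫⁻ z, s.indicator 1 z * gaussianPDF b w (z - x)
      = ∫⁻ x, ∫⁻ z, gaussianPDF a v x * (s.indicator 1 z * gaussianPDF b w (z - x)) := by
        congr 1; funext x
        exact (lintegral_const_mul _ (((measurable_indicator_const_iff 1).mpr hs).mul
          ((measurable_gaussianPDF b w).comp (measurable_id.sub measurable_const)))).symm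
  _ = ∫⁻ z, ∫⁻ x, gaussianPDF a v x * (s.indicator 1 z * gaussianPDF b w (z - x)) := by
        apply lintegral_lintegral_swap
        exact ((measurable_gaussianPDF a v).comp measurable_fst).mul hF |>.aemeasurable
  _ = ∫⁻ z, s.indicator 1 z * gaussianPDF (a + b) (v + w) z := by
        congr 1; funext z
        calc ∫⁻ x, gaussianPDF a v x * (s.indicator 1 z * gaussianPDF b w (z - x))
            = s.indicator 1 z * ∫⁻ x, gaussianPDF a v x * gaussianPDF b w (z - x) := by
              rw [← lintegral_const_mul]
              · congr 1; funext x; ring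
              · exact (measurable_gaussianPDF a v).mul
                  ((measurable_gaussianPDF b w).comp (measurable_const.sub measurable_id))
        _ = s.indicator 1 z * gaussianPDF (a + b) (v + w) z := by
              rw [gauss_conv_lintegral a b hv hw z]
  _ = ∫⁻ z in s, gaussianPDF (a + b) (v + w) z := by
        rw [← lintegral_indicator hs]
        congr 1; funext z
        by_cases hz : z ∈ s
        · rw [Set.indicator_of_mem hz, Set.indicator_of_mem hz]; simp
        · rw [Set.indicator_of_notMem hz, Set.indicator_of_notMem hz, zero_mul]

theorem stmt4_meas
    {Ω : Type*} [MeasurableSpace Ω] (Q : Measure Ω) [IsProbabilityMeasure Q]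
    (γ μ σ δ lam t : ℝ) (hσ : 0 < σ) (hδ : 0 < δ) (hlam : 0 < lam) (ht : 0 < t)
    (W : Ω → ℝ) (N : Ω → ℕ) (Y : ℕ → Ω → ℝ)
    (hWm : Measurable W) (hNm : Measurable N) (hYm : ∀ j, Measurable (Y j))
    (hW : Measure.map W Q = gaussianReal 0 (t).toNNReal)
    (hN : Measure.map N Q = poissonMeasure (lam * t).toNNReal)
    (hY : ∀ j, Measure.map (Y j) Q = gaussianReal μ (δ ^ 2).toNNReal)
    (hIndep : iIndepFun (m := JDTy.instMeasurableSpace) (JDFam W N Y) Q)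
    : ∀ A : Set ℝ, MeasurableSet A →
      (Q ((fun ω ↦ γ * t + σ * W ω + ∑ j ∈ Finset.range (N ω), Y j ω) ⁻¹' A)).toReal =
        ∫ x in A, Real.exp (-(lam * t)) * ∑' m : ℕ,
          (lam * t) ^ m / ((m.factorial : ℝ) * Real.sqrt (2 * Real.pi * (σ ^ 2 * t + m * δ ^ 2)))
            * Real.exp (-(x - γ * t - m * μ) ^ 2 / (2 * (σ ^ 2 * t + m * δ ^ 2))) := by
  intro A hA
  set r : ℝ≥0 := (lam * t).toNNReal with hr_def
  have hrc : (r : ℝ) = lam * t := Real.coe_toNNReal _ (by positivity)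
  -- the real-valued auxiliary family
  set f : (Unit ⊕ Unit ⊕ ℕ) → Ω → ℝ := fun i ↦ match i with
    | Sum.inl _ => fun ω ↦ σ * W ω
    | Sum.inr (Sum.inl _) => fun ω ↦ (N ω : ℝ)
    | Sum.inr (Sum.inr j) => Y j with hf_def
  have hf_indep : iIndepFun f Q := by
    have hg : ∀ i, Measurable ((fun i ↦ match i with
        | Sum.inl _ => fun x : ℝ ↦ σ * x
        | Sum.inr (Sum.inl _) => fun n : ℕ ↦ (n : ℝ)
        | Sum.inr (Sum.inr _) => id : ∀ i, JDTy i → ℝ) i) := by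
      rintro (⟨⟩ | ⟨⟩ | j)
      · exact measurable_id'.const_mul σ
      · exact measurable_from_top
      · exact measurable_id
    have h := hIndep.comp _ hg
    convert h with i
    rcases i with ⟨⟩ | ⟨⟩ | j <;> rfl
  have hf_meas : ∀ i, Measurable (f i) := by
    rintro (⟨⟩ | ⟨⟩ | j)
    · exact hWm.const_mul σ
    · exact measurable_from_top.comp hNm
    · exact hYm j
  -- partial sums
  set S : ℕ → Ω → ℝ := fun m ω ↦ σ * W ω + ∑ j ∈ Finset.range m, Y j ω with hS_def
  have hSm : ∀ m, Measurable (S m) :=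
    fun m ↦ (hWm.const_mul σ).add (Finset.measurable_sum _ fun j _ ↦ hYm j)
  set T : ℕ → Finset (Unit ⊕ Unit ⊕ ℕ) :=
    fun m ↦ insert (Sum.inl ()) ((Finset.range m).image (fun j ↦ Sum.inr (Sum.inr j))) with hT_def
  have hS_eq : ∀ m, S m = ∑ i ∈ T m, f i := by
    intro m
    funext ω
    rw [Finset.sum_apply]
    rw [hT_def]
    rw [Finset.sum_insert (by simp)]
    rw [Finset.sum_image (by intro a _ b _ h; simpa using h)]
  have hnotmemY : ∀ m, Sum.inr (Sum.inr m) ∉ T m := by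
    intro m; simp [hT_def]
  have hnotmemN : ∀ m, (Sum.inr (Sum.inl ()) : Unit ⊕ Unit ⊕ ℕ) ∉ T m := by
    intro m; simp [hT_def]
  have hindSY : ∀ m, IndepFun (S m) (Y m) Q := by
    intro m
    rw [hS_eq m]
    exact hf_indep.indepFun_finsetSum_of_notMem hf_meas (hnotmemY m)
  have hindSN : ∀ m, IndepFun (S m) (fun ω ↦ (N ω : ℝ)) Q := by
    intro m
    rw [hS_eq m]
    exact hf_indep.indepFun_finsetSum_of_notMem hf_meas (hnotmemN m)
  -- variances
  set vW : ℝ≥0 := ⟨σ ^ 2, sq_nonneg σ⟩ * t.toNNReal with hvW_def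
  set vY : ℝ≥0 := (δ ^ 2).toNNReal with hvY_def
  have hvWc : (vW : ℝ) = σ ^ 2 * t := by
    rw [hvW_def]; show σ ^ 2 * (t.toNNReal : ℝ) = σ ^ 2 * t; rw [Real.coe_toNNReal _ ht.le]
  have hvYc : (vY : ℝ) = δ ^ 2 := Real.coe_toNNReal _ (sq_nonneg δ)
  have hvY0 : vY ≠ 0 := by
    have hpos : (0:ℝ) < (vY : ℝ) := by rw [hvYc]; positivity
    intro h; rw [h] at hpos; simp at hpos
  have hVc : ∀ m : ℕ, ((vW + (m : ℝ≥0) * vY : ℝ≥0) : ℝ) = σ ^ 2 * t + m * δ ^ 2 := by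
    intro m; push_cast; rw [hvWc, hvYc]
  have hV0 : ∀ m : ℕ, (vW + (m : ℝ≥0) * vY) ≠ 0 := by
    intro m
    have hpos : (0:ℝ) < ((vW + (m : ℝ≥0) * vY : ℝ≥0) : ℝ) := by
      rw [hVc m]; positivity
    intro h; rw [h] at hpos; simp at hpos
  -- law of S m by induction
  have hlawS : ∀ m, Measure.map (S m) Q = gaussianReal (m * μ) (vW + (m : ℝ≥0) * vY) := by
    intro m
    induction m with
    | zero =>
      have h0 : S 0 = fun ω ↦ σ * W ω := by funext ω; simp [hS_def]
      rw [h0]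
      have hcomp : (fun ω ↦ σ * W ω) = (fun x : ℝ ↦ σ * x) ∘ W := rfl
      rw [hcomp, ← Measure.map_map (measurable_id'.const_mul σ) hWm, hW,
        gaussianReal_map_const_mul]
      norm_num
      rfl
    | succ m ih =>
      have hstep : S (m + 1) = fun ω ↦ S m ω + Y m ω := by
        funext ω; simp only [hS_def, Finset.sum_range_succ]; ring
      rw [hstep]
      have h := map_add_gaussian Q (hSm m) (hYm m) (hindSY m) (hV0 m) hvY0 ih (hY m)
      rw [h]
      congr 1
      · push_cast; ring
      · push_cast; ring
  -- law of Z m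
  set Z : ℕ → Ω → ℝ := fun m ω ↦ γ * t + S m ω with hZ_def
  have hZm : ∀ m, Measurable (Z m) := fun m ↦ measurable_const.add (hSm m)
  have hlawZ : ∀ m, Measure.map (Z m) Q
      = gaussianReal (m * μ + γ * t) (vW + (m : ℝ≥0) * vY) := by
    intro m
    have hcomp : Z m = (fun x : ℝ ↦ x + γ * t) ∘ S m := by
      funext ω; simp [hZ_def]; ring
    rw [hcomp, ← Measure.map_map (measurable_id'.add_const (γ * t)) (hSm m), hlawS m,
      gaussianReal_map_add_const]
  have hindZN : ∀ m, IndepFun (Z m) (fun ω ↦ (N ω : ℝ)) Q := by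
    intro m
    have := (hindSN m).comp (φ := fun x : ℝ ↦ γ * t + x) (ψ := id)
      (measurable_const.add measurable_id) measurable_id
    exact this
  -- decomposition of the event
  set X' : Ω → ℝ := fun ω ↦ γ * t + σ * W ω + ∑ j ∈ Finset.range (N ω), Y j ω with hX'_def
  have hkey : ∀ m, X' ⁻¹' A ∩ N ⁻¹' {m} = Z m ⁻¹' A ∩ N ⁻¹' {m} := by
    intro m
    ext ω
    simp only [Set.mem_inter_iff, Set.mem_preimage, Set.mem_singleton_iff]
    constructor
    · rintro ⟨h1, h2⟩
      refine ⟨?_, h2⟩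
      have : X' ω = Z m ω := by simp [hX'_def, hZ_def, hS_def, h2]; ring
      rwa [← this]
    · rintro ⟨h1, h2⟩
      refine ⟨?_, h2⟩
      have : X' ω = Z m ω := by simp [hX'_def, hZ_def, hS_def, h2]; ring
      rwa [this]
  have hcover : X' ⁻¹' A = ⋃ m, (Z m ⁻¹' A ∩ N ⁻¹' {m}) := by
    ext ω
    simp only [Set.mem_iUnion]
    constructor
    · intro h
      exact ⟨N ω, by
        have := (Set.ext_iff.mp (hkey (N ω)) ω).mp ⟨h, rfl⟩
        exact this⟩
    · rintro ⟨m, hm⟩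
      exact ((Set.ext_iff.mp (hkey m) ω).mpr hm).1
  have hdisj : Pairwise (Function.onFun Disjoint fun m ↦ Z m ⁻¹' A ∩ N ⁻¹' {m}) := by
    intro i j hij
    apply Set.disjoint_left.mpr
    rintro ω ⟨-, hi⟩ ⟨-, hj⟩
    exact hij (hi.symm.trans hj)
  have hmeasm : ∀ m, MeasurableSet (Z m ⁻¹' A ∩ N ⁻¹' {m}) :=
    fun m ↦ (hZm m hA).inter (hNm (measurableSet_singleton m))
  have hsum : Q (X' ⁻¹' A) = ∑' m, Q (Z m ⁻¹' A ∩ N ⁻¹' {m}) := by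
    rw [hcover, measure_iUnion hdisj hmeasm]
  -- per-term evaluation
  have hNfib : ∀ m : ℕ, N ⁻¹' {m} = (fun ω ↦ (N ω : ℝ)) ⁻¹' {(m : ℝ)} := by
    intro m; ext ω; simp [Nat.cast_inj]
  have hterm : ∀ m : ℕ, Q (Z m ⁻¹' A ∩ N ⁻¹' {m})
      = ENNReal.ofReal (poissonPMFReal r m
          * ∫ x in A, gaussianPDFReal (m * μ + γ * t) (vW + (m : ℝ≥0) * vY) x) := by
    intro m
    rw [hNfib m, (hindZN m).measure_inter_preimage_eq_mul A {(m : ℝ)} hA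
      (measurableSet_singleton _), ← hNfib m]
    have hZA : Q (Z m ⁻¹' A)
        = ENNReal.ofReal (∫ x in A, gaussianPDFReal (m * μ + γ * t) (vW + (m : ℝ≥0) * vY) x) := by
      rw [← Measure.map_apply (hZm m) hA, hlawZ m,
        gaussianReal_apply_eq_integral _ (hV0 m) A]
    have hNA : Q (N ⁻¹' {m}) = ENNReal.ofReal (poissonPMFReal r m) := by
      rw [← Measure.map_apply hNm (measurableSet_singleton m), hN]
      rw [poissonMeasure_singleton]
      rfl
    rw [hZA, hNA, ← ENNReal.ofReal_mul (integral_nonneg (fun x ↦ gaussianPDFReal_nonneg _ _ _))]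
    rw [mul_comm]
  -- LHS computation
  have hLHS : (Q (X' ⁻¹' A)).toReal
      = ∑' m : ℕ, poissonPMFReal r m
          * ∫ x in A, gaussianPDFReal (m * μ + γ * t) (vW + (m : ℝ≥0) * vY) x := by
    rw [hsum]
    simp_rw [hterm]
    rw [ENNReal.tsum_toReal_eq (fun m ↦ ENNReal.ofReal_ne_top)]
    congr 1
    funext m
    rw [ENNReal.toReal_ofReal (mul_nonneg poissonPMFReal_nonneg
      (integral_nonneg (fun x ↦ gaussianPDFReal_nonneg _ _ _)))]
  rw [hLHS]
  -- RHS computation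
  set g : ℕ → ℝ → ℝ := fun m x ↦ poissonPMFReal r m
      * gaussianPDFReal (m * μ + γ * t) (vW + (m : ℝ≥0) * vY) x with hg_def
  have hptwise : ∀ x : ℝ, Real.exp (-(lam * t)) * ∑' m : ℕ,
      (lam * t) ^ m / ((m.factorial : ℝ) * Real.sqrt (2 * Real.pi * (σ ^ 2 * t + m * δ ^ 2)))
        * Real.exp (-(x - γ * t - m * μ) ^ 2 / (2 * (σ ^ 2 * t + m * δ ^ 2)))
      = ∑' m : ℕ, g m x := by
    intro x
    rw [← tsum_mul_left]
    congr 1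
    funext m
    rw [hg_def]
    simp only [poissonPMFReal, gaussianPDFReal, hrc, hVc m]
    have hxexp : -(x - (m * μ + γ * t)) ^ 2 / (2 * (σ ^ 2 * t + m * δ ^ 2))
        = -(x - γ * t - m * μ) ^ 2 / (2 * (σ ^ 2 * t + m * δ ^ 2)) := by ring_nf
    rw [hxexp]
    have hsq : Real.sqrt (2 * Real.pi * (σ ^ 2 * t + m * δ ^ 2)) ≠ 0 := by
      have : (0:ℝ) < 2 * Real.pi * (σ ^ 2 * t + m * δ ^ 2) := by
        have : (0:ℝ) ≤ (m:ℝ) * δ ^ 2 := by positivity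
        have h2 : (0:ℝ) < σ ^ 2 * t := by positivity
        nlinarith [Real.pi_pos]
      positivity
    have hfact : (m.factorial : ℝ) ≠ 0 := Nat.cast_ne_zero.mpr m.factorial_ne_zero
    field_simp
  simp_rw [hptwise]
  -- swap integral and sum
  have hgmeas : ∀ m, AEStronglyMeasurable (g m) (volume.restrict A) :=
    fun m ↦ ((measurable_gaussianPDFReal _ _).const_mul _).aestronglyMeasurable
  have hbound : ∑' m, ∫⁻ x, ‖g m x‖₊ ∂(volume.restrict A) ≠ ⊤ := by
    have hle : ∀ m, ∫⁻ x, ‖g m x‖₊ ∂(volume.restrict A) ≤ poissonPMF r m := by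
      intro m
      have h1 : ∀ x, (‖g m x‖₊ : ℝ≥0∞) = ENNReal.ofReal (g m x) := by
        intro x
        rw [← Real.enorm_eq_ofReal (mul_nonneg poissonPMFReal_nonneg
          (gaussianPDFReal_nonneg _ _ _))]
        rfl
      simp_rw [h1]
      calc ∫⁻ x, ENNReal.ofReal (g m x) ∂(volume.restrict A)
          ≤ ∫⁻ x, ENNReal.ofReal (g m x) := by
            exact lintegral_mono' Measure.restrict_le_self le_rfl
      _ = ENNReal.ofReal (poissonPMFReal r m) * ∫⁻ x,
            ENNReal.ofReal (gaussianPDFReal (m * μ + γ * t) (vW + (m : ℝ≥0) * vY) x) := by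
            simp_rw [hg_def, ENNReal.ofReal_mul poissonPMFReal_nonneg]
            rw [lintegral_const_mul _ (measurable_gaussianPDFReal _ _).ennreal_ofReal]
      _ = ENNReal.ofReal (poissonPMFReal r m) := by
            rw [lintegral_gaussianPDFReal_eq_one _ (hV0 m), mul_one]
      _ = poissonPMF r m := rfl
    refine ne_of_lt (lt_of_le_of_lt (ENNReal.tsum_le_tsum hle) ?_)
    rw [(poissonPMF r).tsum_coe]
    exact ENNReal.one_lt_top
  rw [integral_tsum hgmeas hbound]
  congr 1
  funext m
  rw [hg_def]
  simp only []
  rw [MeasureTheory.integral_const_mul]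

lemma aemeasurable_of_map_eq {Ω α : Type*} [MeasurableSpace Ω] [MeasurableSpace α]
    {Q : Measure Ω} {f : Ω → α} {P : Measure α} [IsProbabilityMeasure P]
    (h : Measure.map f Q = P) : AEMeasurable f Q := by
  by_contra hf
  rw [Measure.map_of_not_aemeasurable hf] at h
  have := congrArg (fun m : Measure α ↦ m Set.univ) h
  simp [measure_univ] at this

/-- series representation of the distribution of `X t` (normal jumps). -/
theorem stmt4
    {Ω : Type*} [MeasurableSpace Ω] (Q : Measure Ω) [IsProbabilityMeasure Q]
    (γ μ σ δ lam t : ℝ) (hσ : 0 < σ) (hδ : 0 < δ) (hlam : 0 < lam) (ht : 0 < t)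
    (W : Ω → ℝ) (N : Ω → ℕ) (Y : ℕ → Ω → ℝ)
    (hW : Measure.map W Q = gaussianReal 0 (t).toNNReal)
    (hN : Measure.map N Q = poissonMeasure (lam * t).toNNReal)
    (hY : ∀ j, Measure.map (Y j) Q = gaussianReal μ (δ ^ 2).toNNReal)
    (hIndep : iIndepFun (m := JDTy.instMeasurableSpace) (JDFam W N Y) Q)
    (X : Ω → ℝ) (hX : ∀ ω, X ω = γ * t + σ * W ω + ∑ j ∈ Finset.range (N ω), Y j ω)
    : ∀ A : Set ℝ, MeasurableSet A →
      (Q (X ⁻¹' A)).toReal =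
        ∫ x in A, Real.exp (-(lam * t)) * ∑' m : ℕ,
          (lam * t) ^ m / ((m.factorial : ℝ) * Real.sqrt (2 * Real.pi * (σ ^ 2 * t + m * δ ^ 2)))
            * Real.exp (-(x - γ * t - m * μ) ^ 2 / (2 * (σ ^ 2 * t + m * δ ^ 2))) := by
  intro A hA
  have hWae : AEMeasurable W Q := aemeasurable_of_map_eq hW
  have hNae : AEMeasurable N Q := aemeasurable_of_map_eq hN
  have hYae : ∀ j, AEMeasurable (Y j) Q := fun j ↦ aemeasurable_of_map_eq (hY j)
  set W' := hWae.mk W with hW'_def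
  set N' := hNae.mk N with hN'_def
  set Y' : ℕ → Ω → ℝ := fun j ↦ (hYae j).mk (Y j) with hY'_def
  have hW' : Measure.map W' Q = gaussianReal 0 (t).toNNReal := by
    rw [← Measure.map_congr hWae.ae_eq_mk]; exact hW
  have hN' : Measure.map N' Q = poissonMeasure (lam * t).toNNReal := by
    rw [← Measure.map_congr hNae.ae_eq_mk]; exact hN
  have hY' : ∀ j, Measure.map (Y' j) Q = gaussianReal μ (δ ^ 2).toNNReal := by
    intro j; rw [← Measure.map_congr (hYae j).ae_eq_mk]; exact hY j
  have hae : ∀ i : Unit ⊕ Unit ⊕ ℕ, JDFam W N Y i =ᵐ[Q] JDFam W' N' Y' i := by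
    rintro (⟨⟩ | ⟨⟩ | j)
    · exact hWae.ae_eq_mk
    · exact hNae.ae_eq_mk
    · exact (hYae j).ae_eq_mk
  have hIndep' : iIndepFun (m := JDTy.instMeasurableSpace) (JDFam W' N' Y') Q := by
    rw [iIndepFun_iff_measure_inter_preimage_eq_mul] at hIndep ⊢
    intro S sets hsets
    have hall : ∀ᵐ ω ∂Q, ∀ i : Unit ⊕ Unit ⊕ ℕ, JDFam W N Y i ω = JDFam W' N' Y' i ω :=
      MeasureTheory.ae_all_iff.mpr hae
    have hInter : (⋂ i ∈ S, JDFam W N Y i ⁻¹' sets i)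
        =ᵐ[Q] (⋂ i ∈ S, JDFam W' N' Y' i ⁻¹' sets i) := by
      filter_upwards [hall] with ω hω
      change (ω ∈ ⋂ i ∈ S, JDFam W N Y i ⁻¹' sets i)
        = (ω ∈ ⋂ i ∈ S, JDFam W' N' Y' i ⁻¹' sets i)
      rw [eq_iff_iff]
      simp only [Set.mem_iInter, Set.mem_preimage]
      exact forall₂_congr fun i _ ↦ by rw [hω i]
    have hsingle : ∀ i, (JDFam W N Y i ⁻¹' sets i : Set Ω) =ᵐ[Q] (JDFam W' N' Y' i ⁻¹' sets i) := by
      intro i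
      filter_upwards [hall] with ω hω
      change (ω ∈ JDFam W N Y i ⁻¹' sets i) = (ω ∈ JDFam W' N' Y' i ⁻¹' sets i)
      rw [eq_iff_iff]
      simp only [Set.mem_preimage]
      rw [hω i]
    rw [← measure_congr hInter, hIndep S hsets]
    exact Finset.prod_congr rfl fun i _ ↦ measure_congr (hsingle i)
  have haeX : ∀ᵐ ω ∂Q, X ω = γ * t + σ * W' ω + ∑ j ∈ Finset.range (N' ω), Y' j ω := by
    filter_upwards [hWae.ae_eq_mk, hNae.ae_eq_mk, MeasureTheory.ae_all_iff.mpr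
      (fun j ↦ (hYae j).ae_eq_mk)] with ω h1 h2 h3
    rw [hX, h1, h2]
    congr 1
    exact Finset.sum_congr rfl fun j _ ↦ h3 j
  have hset : (X ⁻¹' A)
      =ᵐ[Q] ((fun ω ↦ γ * t + σ * W' ω + ∑ j ∈ Finset.range (N' ω), Y' j ω) ⁻¹' A) := by
    filter_upwards [haeX] with ω hω
    change (ω ∈ X ⁻¹' A)
      = (ω ∈ (fun ω ↦ γ * t + σ * W' ω + ∑ j ∈ Finset.range (N' ω), Y' j ω) ⁻¹' A)
    rw [eq_iff_iff]
    simp only [Set.mem_preimage, hω]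
  rw [measure_congr hset]
  exact stmt4_meas Q γ μ σ δ lam t hσ hδ hlam ht W' N' Y'
    hWae.measurable_mk hNae.measurable_mk (fun j ↦ (hYae j).measurable_mk)
    hW' hN' hY' hIndep' A hA
end
end

section
/- The law of X_t under Q is absolutely continuous with respect to Lebesgue measure, with probability density function f_{X_t}(x) = e^{−λt} Σ_{m=0}^∞ ( (λt)^m / ( m! √(2π(σ²t + mδ²)) ) ) · exp( −(x − γt − mμ)² / (2(σ²t + mδ²)) ); that is, the law of X_t equals Lebesgue measure with density f_{X_t}. -/
open MeasureTheory ProbabilityTheory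

noncomputable section

open Real
open scoped NNReal ENNReal

section Aux

lemma gauss_conv_pdf_s5 (m1 m2 : ℝ) (v1 v2 : ℝ≥0) (h1 : v1 ≠ 0) (h2 : v2 ≠ 0) (z : ℝ) :
    ∫ x : ℝ, gaussianPDFReal m1 v1 x * gaussianPDFReal m2 v2 (z - x) =
      gaussianPDFReal (m1 + m2) (v1 + v2) z := by
  have hv1 : (0:ℝ) < v1 := by positivity
  have hv2 : (0:ℝ) < v2 := by positivity
  set a : ℝ := ((v1:ℝ) + v2) / (2 * v1 * v2) with ha_def
  set c : ℝ := ((v2:ℝ) * m1 + v1 * (z - m2)) / ((v1:ℝ) + v2) with hc_def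
  have hV : (0:ℝ) < (v1:ℝ) + v2 := by positivity
  have ha : 0 < a := by positivity
  have key : ∀ x : ℝ, gaussianPDFReal m1 v1 x * gaussianPDFReal m2 v2 (z - x) =
      gaussianPDFReal (m1 + m2) (v1 + v2) z * ((Real.sqrt (π / a))⁻¹ * Real.exp (-(a * (x - c) ^ 2))) := by
    intro x
    simp only [gaussianPDFReal, NNReal.coe_add]
    rw [mul_mul_mul_comm, ← Real.exp_add, mul_mul_mul_comm, ← Real.exp_add]
    congr 1
    · -- constants
      rw [← mul_inv, ← mul_inv, ← Real.sqrt_mul (by positivity), ← Real.sqrt_mul (by positivity)]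
      congr 1
      rw [show (2:ℝ) * π * ↑v1 * (2 * π * ↑v2) = (2 * π * (↑v1 + ↑v2)) * (π / a) by
        rw [ha_def]; field_simp]
    · -- exponents
      congr 1
      rw [ha_def, hc_def]
      field_simp
      ring
  calc ∫ x : ℝ, gaussianPDFReal m1 v1 x * gaussianPDFReal m2 v2 (z - x)
      = ∫ x : ℝ, gaussianPDFReal (m1 + m2) (v1 + v2) z *
          ((Real.sqrt (π / a))⁻¹ * Real.exp (-(a * (x - c) ^ 2))) := by
        exact integral_congr_ae (Filter.Eventually.of_forall key)
    _ = gaussianPDFReal (m1 + m2) (v1 + v2) z * ((Real.sqrt (π / a))⁻¹ *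
          ∫ x : ℝ, Real.exp (-(a * (x - c) ^ 2))) := by
        rw [integral_const_mul, integral_const_mul]
    _ = gaussianPDFReal (m1 + m2) (v1 + v2) z := by
        have : ∫ x : ℝ, Real.exp (-(a * (x - c) ^ 2)) = Real.sqrt (π / a) := by
          have h := integral_gaussian a
          simp_rw [sub_eq_add_neg, ← neg_mul]
          rw [integral_add_right_eq_self (fun x => Real.exp (-a * x ^ 2)) (-c)]
          simpa using h
        rw [this, inv_mul_cancel₀ (by positivity), mul_one]

lemma conv_withDensity (f g : ℝ → ℝ≥0∞) (hf : Measurable f) (hg : Measurable g) :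
    Measure.map (fun p : ℝ × ℝ => p.1 + p.2)
        ((volume.withDensity f).prod (volume.withDensity g)) =
      volume.withDensity (fun z => ∫⁻ x, f x * g (z - x)) := by
  ext s hs
  rw [Measure.map_apply measurable_add hs,
    Measure.prod_apply (measurable_add hs)]
  have h1 : ∀ x : ℝ, ((volume.withDensity g) (Prod.mk x ⁻¹' ((fun p : ℝ × ℝ => p.1 + p.2) ⁻¹' s)))
      = ∫⁻ u in s, g (u - x) := by
    intro x
    have hset : (Prod.mk x ⁻¹' ((fun p : ℝ × ℝ => p.1 + p.2) ⁻¹' s)) = (fun y : ℝ => y + x) ⁻¹' s := by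
      ext y; simp [add_comm]
    rw [hset, withDensity_apply _ (measurable_add_const x hs)]
    calc ∫⁻ y in (fun y : ℝ => y + x) ⁻¹' s, g y
        = ∫⁻ y, s.indicator (fun u => g (u - x)) (y + x) := by
          rw [← lintegral_indicator (measurable_add_const x hs)]
          congr 1; ext y
          by_cases hy : y + x ∈ s <;>
            simp [Set.indicator, hy, Set.mem_preimage]
      _ = ∫⁻ u, s.indicator (fun u => g (u - x)) u :=
          lintegral_add_right_eq_self (s.indicator fun u => g (u - x)) x
      _ = ∫⁻ u in s, g (u - x) := lintegral_indicator hs _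
  simp_rw [h1]
  rw [lintegral_withDensity_eq_lintegral_mul volume hf]
  · simp only [Pi.mul_apply]
    rw [withDensity_apply _ hs]
    have hmg : ∀ x : ℝ, Measurable fun u : ℝ => g (u - x) := fun x =>
      hg.comp (measurable_id.sub_const x)
    calc ∫⁻ x, f x * ∫⁻ u in s, g (u - x)
        = ∫⁻ x, ∫⁻ u in s, f x * g (u - x) := by
          congr 1; ext x; rw [lintegral_const_mul _ (hmg x)]
      _ = ∫⁻ u in s, ∫⁻ x, f x * g (u - x) := by
          apply lintegral_lintegral_swap
          exact ((hf.comp measurable_fst).mul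
            (hg.comp (measurable_snd.sub measurable_fst))).aemeasurable
  · exact Measurable.lintegral_prod_right' (f := fun p : ℝ × ℝ => g (p.2 - p.1))
      (hg.comp (measurable_snd.sub measurable_fst))

lemma gaussianReal_conv' (m1 m2 : ℝ) (v1 v2 : ℝ≥0) (h1 : v1 ≠ 0) (h2 : v2 ≠ 0) :
    Measure.map (fun p : ℝ × ℝ => p.1 + p.2)
        ((gaussianReal m1 v1).prod (gaussianReal m2 v2)) =
      gaussianReal (m1 + m2) (v1 + v2) := by
  rw [gaussianReal_of_var_ne_zero _ h1, gaussianReal_of_var_ne_zero _ h2,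
    gaussianReal_of_var_ne_zero _ (by simp [h1]),
    conv_withDensity _ _ (measurable_gaussianPDF _ _) (measurable_gaussianPDF _ _)]
  congr 1
  ext z
  have hint : Integrable (fun x => gaussianPDFReal m1 v1 x * gaussianPDFReal m2 v2 (z - x)) := by
    apply Integrable.mono' (((integrable_gaussianPDFReal m1 v1).const_mul
      ((Real.sqrt (2 * Real.pi * v2))⁻¹)))
    · exact ((measurable_gaussianPDFReal m1 v1).mul
        ((measurable_gaussianPDFReal m2 v2).comp (measurable_const.sub measurable_id))).aestronglyMeasurable
    · refine Filter.Eventually.of_forall fun x => ?_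
      rw [Real.norm_eq_abs, abs_of_nonneg (mul_nonneg (gaussianPDFReal_nonneg _ _ _) (gaussianPDFReal_nonneg _ _ _))]
      · rw [mul_comm ((Real.sqrt (2 * Real.pi * v2))⁻¹) _]
        apply mul_le_mul_of_nonneg_left _ (gaussianPDFReal_nonneg _ _ _)
        rw [gaussianPDFReal]
        calc (√(2 * Real.pi * v2))⁻¹ * Real.exp (-(z - x - m2) ^ 2 / (2 * v2))
            ≤ (√(2 * Real.pi * v2))⁻¹ * 1 := by
              apply mul_le_mul_of_nonneg_left _ (by positivity)
              exact Real.exp_le_one_iff.mpr (div_nonpos_of_nonpos_of_nonneg (neg_nonpos_of_nonneg (sq_nonneg _)) (by positivity))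
          _ = _ := mul_one _
  calc ∫⁻ x, gaussianPDF m1 v1 x * gaussianPDF m2 v2 (z - x)
      = ∫⁻ x, ENNReal.ofReal (gaussianPDFReal m1 v1 x * gaussianPDFReal m2 v2 (z - x)) := by
        simp_rw [gaussianPDF,
          ENNReal.ofReal_mul (gaussianPDFReal_nonneg m1 v1 _)]
    _ = ENNReal.ofReal (∫ x, gaussianPDFReal m1 v1 x * gaussianPDFReal m2 v2 (z - x)) := by
        rw [← ofReal_integral_eq_lintegral_ofReal hint]
        exact Filter.Eventually.of_forall fun x =>
          mul_nonneg (gaussianPDFReal_nonneg _ _ _) (gaussianPDFReal_nonneg _ _ _)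
    _ = gaussianPDF (m1 + m2) (v1 + v2) z := by
        rw [gauss_conv_pdf_s5 m1 m2 v1 v2 h1 h2 z, gaussianPDF]


variable {Ω : Type*} [MeasurableSpace Ω] {Q : Measure Ω}
variable {W : Ω → ℝ} {N : Ω → ℕ} {Y : ℕ → Ω → ℝ}

/-- σ-algebra generated by the variables with indices in `S`. -/
def MS (W : Ω → ℝ) (N : Ω → ℕ) (Y : ℕ → Ω → ℝ) (S : Set (Unit ⊕ Unit ⊕ ℕ)) :
    MeasurableSpace Ω :=
  ⨆ i ∈ S, MeasurableSpace.comap (JDFam W N Y i) (JDTy.instMeasurableSpace i)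

lemma JDFam_measurable (hWm : Measurable W) (hNm : Measurable N)
    (hYm : ∀ j, Measurable (Y j)) : ∀ i, Measurable (JDFam W N Y i)
  | Sum.inl _ => hWm
  | Sum.inr (Sum.inl _) => hNm
  | Sum.inr (Sum.inr j) => hYm j

lemma indep_MS (hWm : Measurable W) (hNm : Measurable N) (hYm : ∀ j, Measurable (Y j))
    (hIndep : iIndepFun (m := JDTy.instMeasurableSpace) (JDFam W N Y) Q)
    {S T : Set (Unit ⊕ Unit ⊕ ℕ)} (hST : Disjoint S T) :
    Indep (MS W N Y S) (MS W N Y T) Q := by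
  apply indep_iSup_of_disjoint _ _ hST
  · exact fun i => (JDFam_measurable hWm hNm hYm i).comap_le
  · exact hIndep

lemma measurable_MS_W (S : Set (Unit ⊕ Unit ⊕ ℕ)) (hS : Sum.inl () ∈ S) :
    Measurable[MS W N Y S] W :=
  measurable_iff_comap_le.mpr
    (le_biSup (fun i => MeasurableSpace.comap (JDFam W N Y i) (JDTy.instMeasurableSpace i)) hS)

lemma measurable_MS_Y (S : Set (Unit ⊕ Unit ⊕ ℕ)) (j : ℕ) (hS : Sum.inr (Sum.inr j) ∈ S) :
    Measurable[MS W N Y S] (Y j) :=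
  measurable_iff_comap_le.mpr
    (le_biSup (fun i => MeasurableSpace.comap (JDFam W N Y i) (JDTy.instMeasurableSpace i)) hS)

def Sl (m : ℕ) : Set (Unit ⊕ Unit ⊕ ℕ) :=
  {i | i = Sum.inl () ∨ ∃ j < m, i = Sum.inr (Sum.inr j)}

lemma measurable_MS_Sm (σ c : ℝ) (m : ℕ) :
    Measurable[MS W N Y (Sl m)] (fun ω => c + σ * W ω + ∑ j ∈ Finset.range m, Y j ω) := by
  apply Measurable.add
  · exact (measurable_MS_W _ (Or.inl rfl)).const_mul σ |>.const_add c
  · apply Finset.measurable_sum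
    intro j hj
    exact measurable_MS_Y _ j (Or.inr ⟨j, Finset.mem_range.mp hj, rfl⟩)

lemma indepFun_Sm_Y (hWm : Measurable W) (hNm : Measurable N) (hYm : ∀ j, Measurable (Y j))
    (hIndep : iIndepFun (m := JDTy.instMeasurableSpace) (JDFam W N Y) Q) (σ c : ℝ) (m : ℕ) :
    IndepFun (fun ω => c + σ * W ω + ∑ j ∈ Finset.range m, Y j ω) (Y m) Q := by
  have hdisj : Disjoint (Sl m) {Sum.inr (Sum.inr m)} := by
    rw [Set.disjoint_singleton_right]
    rintro (h | ⟨j, hj, h⟩) <;> simp_all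
  have h := indep_MS hWm hNm hYm hIndep hdisj
  have h1 := indep_of_indep_of_le_left h
    (measurable_iff_comap_le.mp (measurable_MS_Sm σ c m))
  exact indep_of_indep_of_le_right h1
    (measurable_iff_comap_le.mp (measurable_MS_Y {Sum.inr (Sum.inr m)} m rfl))

lemma indepFun_N_Sm (hWm : Measurable W) (hNm : Measurable N) (hYm : ∀ j, Measurable (Y j))
    (hIndep : iIndepFun (m := JDTy.instMeasurableSpace) (JDFam W N Y) Q) (σ c : ℝ) (m : ℕ) :
    IndepFun N (fun ω => c + σ * W ω + ∑ j ∈ Finset.range m, Y j ω) Q := by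
  have hdisj : Disjoint {Sum.inr (Sum.inl ())} (Sl m) := by
    rw [Set.disjoint_singleton_left]
    rintro (h | ⟨j, hj, h⟩) <;> simp_all
  have h := indep_MS hWm hNm hYm hIndep hdisj
  have hN : Measurable[MS W N Y {Sum.inr (Sum.inl ())}] N :=
    measurable_iff_comap_le.mpr
      (le_biSup (fun i => MeasurableSpace.comap (JDFam W N Y i) (JDTy.instMeasurableSpace i))
        (i := Sum.inr (Sum.inl ())) (Set.mem_singleton _))
  have h1 := indep_of_indep_of_le_left h (measurable_iff_comap_le.mp hN)
  exact indep_of_indep_of_le_right h1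
    (measurable_iff_comap_le.mp (measurable_MS_Sm σ c m))

lemma map_add_indep [IsProbabilityMeasure Q] {X Z : Ω → ℝ}
    (hXm : Measurable X) (hZm : Measurable Z) (hind : IndepFun X Z Q)
    {m1 m2 : ℝ} {v1 v2 : ℝ≥0} (h1 : v1 ≠ 0) (h2 : v2 ≠ 0)
    (hXl : Measure.map X Q = gaussianReal m1 v1) (hZl : Measure.map Z Q = gaussianReal m2 v2) :
    Measure.map (fun ω => X ω + Z ω) Q = gaussianReal (m1 + m2) (v1 + v2) := by
  have hp := (indepFun_iff_map_prod_eq_prod_map_map hXm.aemeasurable hZm.aemeasurable).mp hind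
  have heq : (fun ω => X ω + Z ω) = (fun p : ℝ × ℝ => p.1 + p.2) ∘ (fun ω => (X ω, Z ω)) := rfl
  rw [heq, ← Measure.map_map measurable_add (hXm.prodMk hZm), hp, hXl, hZl,
    gaussianReal_conv' _ _ _ _ h1 h2]

lemma law_Sm [IsProbabilityMeasure Q] {μ σ δ t : ℝ}
    (hσ : 0 < σ) (hδ : 0 < δ) (ht : 0 < t)
    (hWm : Measurable W) (hNm : Measurable N) (hYm : ∀ j, Measurable (Y j))
    (hW : Measure.map W Q = gaussianReal 0 (t).toNNReal)
    (hY : ∀ j, Measure.map (Y j) Q = gaussianReal μ (δ ^ 2).toNNReal)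
    (hIndep : iIndepFun (m := JDTy.instMeasurableSpace) (JDFam W N Y) Q) (m : ℕ) :
    Measure.map (fun ω => σ * W ω + ∑ j ∈ Finset.range m, Y j ω) Q
      = gaussianReal (m * μ) ((σ ^ 2 * t + m * δ ^ 2).toNNReal) := by
  induction m with
  | zero =>
    simp only [Finset.range_zero, Finset.sum_empty, add_zero, Nat.cast_zero, zero_mul, mul_zero]
    have heq : (fun ω => σ * W ω) = (fun x : ℝ => σ * x) ∘ W := rfl
    rw [heq, ← Measure.map_map (measurable_const_mul σ) hWm, hW,
      gaussianReal_map_const_mul σ]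
    congr 1
    · ring
    · ext
      simp only [NNReal.coe_mul, NNReal.coe_mk, Real.coe_toNNReal _ ht.le,
        Real.coe_toNNReal _ (by positivity : (0:ℝ) ≤ σ ^ 2 * t)]
  | succ m ih =>
    have hind := indepFun_Sm_Y hWm hNm hYm hIndep σ 0 m
    simp only [zero_add] at hind
    have heq : (fun ω => σ * W ω + ∑ j ∈ Finset.range (m + 1), Y j ω)
        = fun ω => (σ * W ω + ∑ j ∈ Finset.range m, Y j ω) + Y m ω := by
      funext ω; rw [Finset.sum_range_succ]; ring
    rw [heq, map_add_indep (show Measurable (fun ω => σ * W ω + ∑ j ∈ Finset.range m, Y j ω) from (hWm.const_mul σ).add (Finset.measurable_sum _ fun j _ => hYm j))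
      (hYm m) hind (Real.toNNReal_pos.mpr (by positivity)).ne' (Real.toNNReal_pos.mpr (by positivity)).ne' ih (hY m)]
    congr 1
    · push_cast; ring
    · rw [← Real.toNNReal_add (by positivity) (by positivity)]
      congr 1
      push_cast; ring

lemma stmt5_core [IsProbabilityMeasure Q] {γ μ σ δ lam t : ℝ}
    (hσ : 0 < σ) (hδ : 0 < δ) (hlam : 0 < lam) (ht : 0 < t)
    (hWm : Measurable W) (hNm : Measurable N) (hYm : ∀ j, Measurable (Y j))
    (hW : Measure.map W Q = gaussianReal 0 (t).toNNReal)
    (hN : Measure.map N Q = poissonMeasure (lam * t).toNNReal)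
    (hY : ∀ j, Measure.map (Y j) Q = gaussianReal μ (δ ^ 2).toNNReal)
    (hIndep : iIndepFun (m := JDTy.instMeasurableSpace) (JDFam W N Y) Q) :
    Measure.map (fun ω => γ * t + σ * W ω + ∑ j ∈ Finset.range (N ω), Y j ω) Q
      = volume.withDensity (fun x => ENNReal.ofReal (
        Real.exp (-(lam * t)) * ∑' m : ℕ,
          (lam * t) ^ m / ((m.factorial : ℝ) * Real.sqrt (2 * Real.pi * (σ ^ 2 * t + m * δ ^ 2)))
            * Real.exp (-(x - γ * t - m * μ) ^ 2 / (2 * (σ ^ 2 * t + m * δ ^ 2))))) := by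
  set T : ℕ → Ω → ℝ := fun m ω => γ * t + σ * W ω + ∑ j ∈ Finset.range m, Y j ω with hT
  have hTm : ∀ m, Measurable (T m) := fun m =>
    (((hWm.const_mul σ).const_add (γ * t)).add (Finset.measurable_sum _ fun j _ => hYm j))
  have hVpos : ∀ m : ℕ, (0:ℝ) < σ ^ 2 * t + m * δ ^ 2 := fun m => by positivity
  have hVne : ∀ m : ℕ, ((σ ^ 2 * t + m * δ ^ 2).toNNReal) ≠ 0 :=
    fun m => (Real.toNNReal_pos.mpr (hVpos m)).ne'
  have hlaw : ∀ m : ℕ, Measure.map (T m) Q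
      = gaussianReal (γ * t + m * μ) ((σ ^ 2 * t + m * δ ^ 2).toNNReal) := by
    intro m
    have heq : T m = (fun x : ℝ => x + γ * t) ∘ (fun ω => σ * W ω + ∑ j ∈ Finset.range m, Y j ω) := by
      funext ω; simp [hT]; ring
    rw [heq, ← Measure.map_map (measurable_add_const (γ * t))
      (show Measurable (fun ω => σ * W ω + ∑ j ∈ Finset.range m, Y j ω) from (hWm.const_mul σ).add (Finset.measurable_sum _ fun j _ => hYm j)),
      law_Sm hσ hδ ht hWm hNm hYm hW hY hIndep m, gaussianReal_map_add_const (γ * t)]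
    rw [add_comm]
  have hXm : Measurable (fun ω => γ * t + σ * W ω + ∑ j ∈ Finset.range (N ω), Y j ω) := by
    have hXT : (fun ω => γ * t + σ * W ω + ∑ j ∈ Finset.range (N ω), Y j ω)
        = fun ω => T (N ω) ω := rfl
    rw [hXT]
    intro s hs
    have : (fun ω => T (N ω) ω) ⁻¹' s = ⋃ m, (N ⁻¹' {m} ∩ T m ⁻¹' s) := by
      ext ω
      simp only [Set.mem_preimage, Set.mem_iUnion, Set.mem_inter_iff, Set.mem_singleton_iff]
      exact ⟨fun h => ⟨N ω, rfl, h⟩, fun ⟨m, hm, h⟩ => by rw [← hm] at h; exact h⟩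
    rw [this]
    exact MeasurableSet.iUnion fun m => (hNm (measurableSet_singleton m)).inter (hTm m hs)
  have hdecomp : Measure.map (fun ω => γ * t + σ * W ω + ∑ j ∈ Finset.range (N ω), Y j ω) Q
      = Measure.sum (fun m => Q (N ⁻¹' {m}) • Measure.map (T m) Q) := by
    ext s hs
    rw [Measure.map_apply hXm hs, Measure.sum_apply _ hs]
    have hpre : (fun ω => γ * t + σ * W ω + ∑ j ∈ Finset.range (N ω), Y j ω) ⁻¹' s
        = ⋃ m, (N ⁻¹' {m} ∩ T m ⁻¹' s) := by
      ext ω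
      simp only [Set.mem_preimage, Set.mem_iUnion, Set.mem_inter_iff, Set.mem_singleton_iff]
      exact ⟨fun h => ⟨N ω, rfl, h⟩, fun ⟨m, hm, h⟩ => by
        rw [show (γ * t + σ * W ω + ∑ j ∈ Finset.range (N ω), Y j ω) = T (N ω) ω from rfl, hm]
        exact h⟩
    rw [hpre, measure_iUnion ?_ fun m => (hNm (measurableSet_singleton m)).inter (hTm m hs)]
    · congr 1
      funext m
      rw [Measure.smul_apply, smul_eq_mul, Measure.map_apply (hTm m) hs]
      exact (indepFun_iff_measure_inter_preimage_eq_mul.mp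
        (indepFun_N_Sm hWm hNm hYm hIndep σ (γ * t) m)) {m} s (measurableSet_singleton m) hs
    · intro m k hmk
      apply Set.disjoint_left.mpr
      rintro ω ⟨hm, -⟩ ⟨hk, -⟩
      exact hmk (hm.symm.trans hk)
  have hp : ∀ m : ℕ, Q (N ⁻¹' {m})
      = ENNReal.ofReal (poissonPMFReal (lam * t).toNNReal m) := by
    intro m
    rw [← Measure.map_apply hNm (measurableSet_singleton m), hN,
      poissonMeasure_singleton]
    rfl
  rw [hdecomp]
  have hsum : Measure.sum (fun m => Q (N ⁻¹' {m}) • Measure.map (T m) Q)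
      = Measure.sum (fun m => volume.withDensity
        (fun x => ENNReal.ofReal (poissonPMFReal (lam * t).toNNReal m)
          * gaussianPDF (γ * t + m * μ) ((σ ^ 2 * t + m * δ ^ 2).toNNReal) x)) := by
    congr 1
    funext m
    rw [hp m, hlaw m, gaussianReal_of_var_ne_zero _ (hVne m),
      ← withDensity_smul _ (measurable_gaussianPDF _ _)]
    rfl
  rw [hsum, ← withDensity_tsum (fun m => (measurable_gaussianPDF _ _).const_mul _)]
  congr 1
  funext x
  rw [ENNReal.tsum_apply]
  -- now the pointwise ENNReal identity
  have hVcoe : ∀ m : ℕ, (((σ ^ 2 * t + m * δ ^ 2).toNNReal : ℝ≥0) : ℝ)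
      = σ ^ 2 * t + m * δ ^ 2 := fun m => Real.coe_toNNReal _ (hVpos m).le
  have hrcoe : (((lam * t).toNNReal : ℝ≥0) : ℝ) = lam * t :=
    Real.coe_toNNReal _ (by positivity)
  have hterm : ∀ m : ℕ, (ENNReal.ofReal (poissonPMFReal (lam * t).toNNReal m)
        * gaussianPDF (γ * t + m * μ) ((σ ^ 2 * t + m * δ ^ 2).toNNReal) x)
      = ENNReal.ofReal (Real.exp (-(lam * t)) *
          ((lam * t) ^ m / ((m.factorial : ℝ) * Real.sqrt (2 * Real.pi * (σ ^ 2 * t + m * δ ^ 2)))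
            * Real.exp (-(x - γ * t - m * μ) ^ 2 / (2 * (σ ^ 2 * t + m * δ ^ 2))))) := by
    intro m
    rw [gaussianPDF, ← ENNReal.ofReal_mul poissonPMFReal_nonneg]
    congr 1
    rw [poissonPMFReal, gaussianPDFReal, hVcoe, hrcoe]
    rw [show x - (γ * t + m * μ) = x - γ * t - m * μ by ring]
    ring
  simp_rw [hterm]
  rw [← ENNReal.ofReal_tsum_of_nonneg]
  · rw [tsum_mul_left]
  · intro m
    have h1 : (0:ℝ) ≤ (lam * t) ^ m /
        ((m.factorial : ℝ) * Real.sqrt (2 * Real.pi * (σ ^ 2 * t + m * δ ^ 2))) := by positivity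
    positivity
  · -- summability
    apply Summable.of_nonneg_of_le _ _
      ((Real.summable_pow_div_factorial (lam * t)).mul_right
        ((Real.sqrt (2 * Real.pi * (σ ^ 2 * t)))⁻¹))
    · intro m
      have h1 : (0:ℝ) ≤ (lam * t) ^ m /
          ((m.factorial : ℝ) * Real.sqrt (2 * Real.pi * (σ ^ 2 * t + m * δ ^ 2))) := by positivity
      positivity
    · intro m
      have hexpm : Real.exp (-(lam * t)) ≤ 1 :=
        Real.exp_le_one_iff.mpr (by nlinarith)
      have hexp2 : Real.exp (-(x - γ * t - m * μ) ^ 2 / (2 * (σ ^ 2 * t + m * δ ^ 2))) ≤ 1 :=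
        Real.exp_le_one_iff.mpr (div_nonpos_of_nonpos_of_nonneg
          (neg_nonpos_of_nonneg (sq_nonneg _)) (by positivity))
      have hsqrt : Real.sqrt (2 * Real.pi * (σ ^ 2 * t))
          ≤ Real.sqrt (2 * Real.pi * (σ ^ 2 * t + m * δ ^ 2)) := by
        apply Real.sqrt_le_sqrt
        have : (0:ℝ) ≤ m * δ ^ 2 := by positivity
        nlinarith [Real.pi_pos]
      have hs0 : (0:ℝ) < Real.sqrt (2 * Real.pi * (σ ^ 2 * t)) := by
        apply Real.sqrt_pos.mpr; positivity
      calc Real.exp (-(lam * t)) *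
            ((lam * t) ^ m / ((m.factorial : ℝ) * Real.sqrt (2 * Real.pi * (σ ^ 2 * t + m * δ ^ 2)))
              * Real.exp (-(x - γ * t - m * μ) ^ 2 / (2 * (σ ^ 2 * t + m * δ ^ 2))))
          ≤ 1 * ((lam * t) ^ m / ((m.factorial : ℝ) * Real.sqrt (2 * Real.pi * (σ ^ 2 * t)))
              * 1) := by
            apply mul_le_mul hexpm _ (by positivity) zero_le_one
            apply mul_le_mul _ hexp2 (Real.exp_nonneg _) (by positivity)
            apply div_le_div_of_nonneg_left (by positivity) (by positivity)
            exact mul_le_mul_of_nonneg_left hsqrt (by positivity)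
        _ = (lam * t) ^ m / (m.factorial : ℝ) * (Real.sqrt (2 * Real.pi * (σ ^ 2 * t)))⁻¹ := by
            field_simp

lemma iIndepFun_ae_eq {ι : Type*} {β : ι → Type*} {mβ : ∀ i, MeasurableSpace (β i)}
    {f g : ∀ i, Ω → β i} (hf : iIndepFun (m := mβ) f Q) (h : ∀ i, f i =ᵐ[Q] g i) :
    iIndepFun (m := mβ) g Q := by
  rw [iIndepFun_iff_measure_inter_preimage_eq_mul] at hf ⊢
  intro S sets hmeas
  have hall : ∀ᵐ ω ∂Q, ∀ i ∈ S, f i ω = g i ω := by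
    rw [Filter.eventually_all_finset]
    exact fun i _ => h i
  have hpre : ∀ i, Q (g i ⁻¹' sets i) = Q (f i ⁻¹' sets i) := fun i =>
    measure_congr (Filter.eventuallyEq_set.mpr ((h i).mono fun ω hω => by
      simp [Set.mem_preimage, hω]))
  have hint : Q (⋂ i ∈ S, g i ⁻¹' sets i) = Q (⋂ i ∈ S, f i ⁻¹' sets i) :=
    measure_congr (Filter.eventuallyEq_set.mpr (hall.mono fun ω hω => by
      simp only [Set.mem_iInter, Set.mem_preimage]
      exact ⟨fun hg i hi => (hω i hi) ▸ hg i hi, fun hg i hi => (hω i hi) ▸ hg i hi⟩))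
  rw [hint, hf S hmeas]
  exact Finset.prod_congr rfl fun i _ => (hpre i).symm

end Aux

/-- the law of `X t` is Lebesgue-absolutely continuous with the series density. -/
theorem stmt5
    {Ω : Type*} [MeasurableSpace Ω] (Q : Measure Ω) [IsProbabilityMeasure Q]
    (γ μ σ δ lam t : ℝ) (hσ : 0 < σ) (hδ : 0 < δ) (hlam : 0 < lam) (ht : 0 < t)
    (W : Ω → ℝ) (N : Ω → ℕ) (Y : ℕ → Ω → ℝ)
    (hW : Measure.map W Q = gaussianReal 0 (t).toNNReal)
    (hN : Measure.map N Q = poissonMeasure (lam * t).toNNReal)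
    (hY : ∀ j, Measure.map (Y j) Q = gaussianReal μ (δ ^ 2).toNNReal)
    (hIndep : iIndepFun (m := JDTy.instMeasurableSpace) (JDFam W N Y) Q)
    (X : Ω → ℝ) (hX : ∀ ω, X ω = γ * t + σ * W ω + ∑ j ∈ Finset.range (N ω), Y j ω)
    : Measure.map X Q = volume.withDensity (fun x => ENNReal.ofReal (
        Real.exp (-(lam * t)) * ∑' m : ℕ,
          (lam * t) ^ m / ((m.factorial : ℝ) * Real.sqrt (2 * Real.pi * (σ ^ 2 * t + m * δ ^ 2)))
            * Real.exp (-(x - γ * t - m * μ) ^ 2 / (2 * (σ ^ 2 * t + m * δ ^ 2))))) := by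
  have hWa : AEMeasurable W Q := by
    by_contra h
    rw [Measure.map_of_not_aemeasurable h] at hW
    have := congrArg (fun ν : Measure ℝ => ν Set.univ) hW
    simp [measure_univ] at this
  have hNa : AEMeasurable N Q := by
    by_contra h
    rw [Measure.map_of_not_aemeasurable h] at hN
    have := congrArg (fun ν : Measure ℕ => ν Set.univ) hN
    simp [measure_univ] at this
  have hYa : ∀ j, AEMeasurable (Y j) Q := by
    intro j
    by_contra h
    have hj := hY j
    rw [Measure.map_of_not_aemeasurable h] at hj
    have := congrArg (fun ν : Measure ℝ => ν Set.univ) hj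
    simp [measure_univ] at this
  set W' := hWa.mk W with hW'def
  set N' := hNa.mk N with hN'def
  set Y' : ℕ → Ω → ℝ := fun j => (hYa j).mk (Y j) with hY'def
  have hW' : Measure.map W' Q = gaussianReal 0 (t).toNNReal := by
    rw [← Measure.map_congr hWa.ae_eq_mk]; exact hW
  have hN' : Measure.map N' Q = poissonMeasure (lam * t).toNNReal := by
    rw [← Measure.map_congr hNa.ae_eq_mk]; exact hN
  have hY' : ∀ j, Measure.map (Y' j) Q = gaussianReal μ (δ ^ 2).toNNReal := fun j => by
    rw [← Measure.map_congr (hYa j).ae_eq_mk]; exact hY j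
  have hIndep' : iIndepFun (m := JDTy.instMeasurableSpace) (JDFam W' N' Y') Q := by
    apply iIndepFun_ae_eq hIndep
    rintro (⟨⟩ | ⟨⟩ | j)
    · exact hWa.ae_eq_mk
    · exact hNa.ae_eq_mk
    · exact (hYa j).ae_eq_mk
  have hXae : X =ᵐ[Q] fun ω => γ * t + σ * W' ω + ∑ j ∈ Finset.range (N' ω), Y' j ω := by
    have hYall : ∀ᵐ ω ∂Q, ∀ j, Y j ω = Y' j ω := ae_all_iff.mpr fun j => (hYa j).ae_eq_mk
    filter_upwards [hWa.ae_eq_mk, hNa.ae_eq_mk, hYall] with ω h1 h2 h3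
    rw [hX ω, h1, h2]
    congr 1
    exact Finset.sum_congr rfl fun j _ => h3 j
  rw [Measure.map_congr hXae]
  exact stmt5_core hσ hδ hlam ht hWa.measurable_mk hNa.measurable_mk
    (fun j => (hYa j).measurable_mk) hW' hN' hY' hIndep'
end
end

section
/- Let S be an integrable real-valued random variable on a probability space (Ω, 𝒢, Q). Then E_Q[|S|] = (2/π) ∫_0^∞ ( 1 − Re( E_Q[e^{i x S}] ) ) / x² dx. -/
open MeasureTheory ProbabilityTheory Real Set Filter Topology

noncomputable section


lemma hasDerivAt_exp_neg_mul (t x : ℝ) :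
    HasDerivAt (fun x : ℝ => Real.exp (-(t*x))) (Real.exp (-(t*x)) * (-t)) x := by
  have h : HasDerivAt (fun x : ℝ => -(t*x)) (-t) x := by
    simpa using ((hasDerivAt_id x).const_mul t).fun_neg
  simpa using h.exp

/-- Laplace transform of cosine. -/
lemma laplace_cos {t : ℝ} (a : ℝ) (ht : 0 < t) :
    ∫ x in Ioi (0:ℝ), Real.exp (-(t*x)) * Real.cos (a*x) = t / (t^2 + a^2) := by
  have hd : t^2 + a^2 ≠ 0 := by positivity
  set F : ℝ → ℝ := fun x => Real.exp (-(t*x)) * (a * Real.sin (a*x) - t * Real.cos (a*x)) / (t^2+a^2) with hF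
  have hderiv : ∀ x ∈ Ioi (0:ℝ), HasDerivAt F (Real.exp (-(t*x)) * Real.cos (a*x)) x := by
    intro x _
    have hsin : HasDerivAt (fun x : ℝ => Real.sin (a*x)) (Real.cos (a*x) * a) x := by
      simpa using (((hasDerivAt_id x).const_mul a).sin (f := fun x => a * x))
    have hcos : HasDerivAt (fun x : ℝ => Real.cos (a*x)) (-Real.sin (a*x) * a) x := by
      simpa using (((hasDerivAt_id x).const_mul a).cos (f := fun x => a * x))
    have := (((hasDerivAt_exp_neg_mul t x).fun_mul
      ((hsin.const_mul a).fun_sub (hcos.const_mul t)))).div_const (t^2+a^2)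
    refine this.congr_deriv ?_
    field_simp
    ring
  have hcont : ContinuousWithinAt F (Ici 0) 0 := by
    apply Continuous.continuousWithinAt
    fun_prop
  have hint : IntegrableOn (fun x => Real.exp (-(t*x)) * Real.cos (a*x)) (Ioi (0:ℝ)) := by
    apply (exp_neg_integrableOn_Ioi 0 ht).mono'
      ((Continuous.aestronglyMeasurable (by fun_prop)).restrict)
    filter_upwards [] with x
    rw [norm_mul, Real.norm_eq_abs, Real.norm_eq_abs, abs_of_pos (exp_pos _), neg_mul]
    nlinarith [exp_pos (-(t*x)), abs_cos_le_one (a*x), abs_nonneg (Real.cos (a*x))]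
  have htend : Tendsto F atTop (𝓝 0) := by
    have h1 : Tendsto (fun x : ℝ => Real.exp (-(t*x))) atTop (𝓝 0) := by
      have : Tendsto (fun x : ℝ => t * x) atTop atTop := tendsto_id.const_mul_atTop ht
      simpa [Function.comp_def] using (tendsto_exp_neg_atTop_nhds_zero.comp this)
    have h2 : ∀ x, ‖F x‖ ≤ (|a| + |t|) / (t^2+a^2) * Real.exp (-(t*x)) := by
      intro x
      rw [hF]
      simp only [norm_div, Real.norm_eq_abs, abs_mul]
      rw [abs_of_pos (by positivity : (0:ℝ) < t^2+a^2), div_mul_eq_mul_div, mul_comm (|a|+|t|)]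
      gcongr
      · rw [abs_of_pos (exp_pos _)]
      calc |a * Real.sin (a*x) - t * Real.cos (a*x)| ≤ |a * Real.sin (a*x)| + |t * Real.cos (a*x)| := abs_sub _ _
        _ ≤ |a| * 1 + |t| * 1 := by
            rw [abs_mul, abs_mul]; gcongr; exacts [abs_sin_le_one _, abs_cos_le_one _]
        _ = |a| + |t| := by ring
    have h3 : Tendsto (fun x : ℝ => (|a| + |t|) / (t^2+a^2) * Real.exp (-(t*x))) atTop (𝓝 0) := by
      simpa using h1.const_mul ((|a| + |t|) / (t^2+a^2))
    exact squeeze_zero_norm h2 h3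
  have := integral_Ioi_of_hasDerivAt_of_tendsto hcont hderiv hint htend
  rw [this, hF]
  simp
  field_simp

lemma tendsto_mul_exp_neg_mul {x : ℝ} (hx : 0 < x) :
    Tendsto (fun t : ℝ => (x*t) * Real.exp (-(x*t))) atTop (𝓝 0) := by
  have hc : Tendsto (fun t : ℝ => x*t) atTop atTop := tendsto_id.const_mul_atTop hx
  have h1 := (tendsto_pow_mul_exp_neg_atTop_nhds_zero 1).comp hc
  simpa [Function.comp_def] using h1

lemma tendsto_exp_neg_mul {x : ℝ} (hx : 0 < x) :
    Tendsto (fun t : ℝ => Real.exp (-(x*t))) atTop (𝓝 0) := by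
  have hc : Tendsto (fun t : ℝ => x*t) atTop atTop := tendsto_id.const_mul_atTop hx
  simpa [Function.comp_def] using tendsto_exp_neg_atTop_nhds_zero.comp hc

lemma integrableOn_id_mul_exp {x : ℝ} (hx : 0 < x) :
    IntegrableOn (fun t => t * Real.exp (-(x*t))) (Ioi (0:ℝ)) := by
  apply integrable_of_isBigO_exp_neg (half_pos hx) (Continuous.continuousOn (by fun_prop))
  rw [Asymptotics.isBigO_iff]
  refine ⟨1, ?_⟩
  have h0 : Tendsto (fun t : ℝ => t * Real.exp (-((x/2)*t))) atTop (𝓝 0) := by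
    have h2 := (tendsto_mul_exp_neg_mul (half_pos hx)).const_mul (2/x)
    rw [mul_zero] at h2
    apply h2.congr
    intro t; field_simp
  have hev : ∀ᶠ t : ℝ in atTop, t * Real.exp (-((x/2)*t)) < 1 := h0.eventually_lt_const one_pos
  filter_upwards [hev, eventually_ge_atTop (0:ℝ)] with t h1 h2
  have hsplit : Real.exp (-(x*t)) = Real.exp (-((x/2)*t)) * Real.exp (-((x/2)*t)) := by
    rw [← Real.exp_add]; ring_nf
  rw [Real.norm_eq_abs, Real.norm_eq_abs, abs_of_nonneg (by positivity), abs_of_pos (exp_pos _),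
    neg_mul, hsplit, one_mul]
  nlinarith [exp_pos (-((x/2)*t)), mul_nonneg h2 (exp_pos (-((x/2)*t))).le]

lemma integral_id_mul_exp {x : ℝ} (hx : 0 < x) :
    ∫ t in Ioi (0:ℝ), t * Real.exp (-(x*t)) = 1/x^2 := by
  set G : ℝ → ℝ := fun t => -((x*t+1)/x^2) * Real.exp (-(x*t)) with hG
  have hderiv : ∀ t ∈ Ioi (0:ℝ), HasDerivAt G (t * Real.exp (-(x*t))) t := by
    intro t _
    have hexp : HasDerivAt (fun t : ℝ => Real.exp (-(x*t))) (Real.exp (-(x*t)) * (-x)) t := by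
      have h : HasDerivAt (fun t : ℝ => -(x*t)) (-x) t := by
        simpa using ((hasDerivAt_id t).const_mul x).fun_neg
      simpa using h.exp
    have hlin : HasDerivAt (fun t : ℝ => -((x*t+1)/x^2)) (-(x/x^2)) t := by
      have h : HasDerivAt (fun t : ℝ => x*t+1) x t := by
        simpa using ((hasDerivAt_id t).const_mul x).add_const 1
      simpa using (h.div_const (x^2)).fun_neg
    have := hlin.fun_mul hexp
    refine this.congr_deriv ?_
    field_simp
    ring
  have hcont : ContinuousWithinAt G (Ici 0) 0 := (Continuous.continuousWithinAt (by fun_prop))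
  have htend : Tendsto G atTop (𝓝 0) := by
    have h1 := ((tendsto_mul_exp_neg_mul hx).add (tendsto_exp_neg_mul hx)).const_mul (-(1/x^2))
    rw [add_zero, mul_zero] at h1
    apply h1.congr
    intro t; rw [hG]; field_simp
  have := integral_Ioi_of_hasDerivAt_of_tendsto hcont hderiv (integrableOn_id_mul_exp hx) htend
  rw [this, hG]
  norm_num
lemma integrableOn_exp_mul_cos {t : ℝ} (a : ℝ) (ht : 0 < t) :
    IntegrableOn (fun x => Real.exp (-(t*x)) * Real.cos (a*x)) (Ioi (0:ℝ)) := by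
  apply (exp_neg_integrableOn_Ioi 0 ht).mono'
    ((Continuous.aestronglyMeasurable (by fun_prop)).restrict)
  filter_upwards [] with x
  rw [norm_mul, Real.norm_eq_abs, Real.norm_eq_abs, abs_of_pos (exp_pos _), neg_mul]
  nlinarith [exp_pos (-(t*x)), abs_cos_le_one (a*x), abs_nonneg (Real.cos (a*x))]

lemma key_pos {a : ℝ} (ha : 0 < a) :
    IntegrableOn (fun x => (1 - Real.cos (a*x))/x^2) (Ioi (0:ℝ)) ∧
    ∫ x in Ioi (0:ℝ), (1 - Real.cos (a*x))/x^2 = π/2 * a := by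
  set f : ℝ → ℝ → ℝ := fun x t => (1 - Real.cos (a*x)) * (t * Real.exp (-(x*t))) with hf
  have hfnn : ∀ x t, 0 ≤ t → 0 ≤ f x t := fun x t htt => by
    apply mul_nonneg (by nlinarith [Real.cos_le_one (a*x)]) (by positivity)
  -- A1 : inner integral over t
  have hA1 : ∀ x ∈ Ioi (0:ℝ), ∫⁻ t in Ioi (0:ℝ), ENNReal.ofReal (f x t)
      = ENNReal.ofReal ((1 - Real.cos (a*x))/x^2) := by
    intro x hx
    rw [← ofReal_integral_eq_lintegral_ofReal
      ((integrableOn_id_mul_exp hx).const_mul (1 - Real.cos (a*x)))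
      (ae_restrict_of_forall_mem measurableSet_Ioi (fun t htt => hfnn x t (le_of_lt htt)))]
    rw [integral_const_mul, integral_id_mul_exp hx]
    ring_nf
  -- A2 : inner integral over x
  have hA2 : ∀ t ∈ Ioi (0:ℝ), ∫⁻ x in Ioi (0:ℝ), ENNReal.ofReal (f x t)
      = ENNReal.ofReal (a^2/(t^2+a^2)) := by
    intro t ht
    have ht' : (0:ℝ) < t := ht
    have heq : (fun x => f x t) = fun x =>
        t * Real.exp (-(t*x)) - t * (Real.exp (-(t*x)) * Real.cos (a*x)) := by
      funext x; rw [hf]; simp only; ring_nf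
    have hint1 : IntegrableOn (fun x => Real.exp (-(t*x))) (Ioi (0:ℝ)) := by
      simpa [neg_mul] using exp_neg_integrableOn_Ioi (0:ℝ) ht'
    have hint : IntegrableOn (fun x => f x t) (Ioi (0:ℝ)) := by
      rw [heq]
      exact ((hint1.const_mul t).sub ((integrableOn_exp_mul_cos a ht').const_mul t))
    rw [← ofReal_integral_eq_lintegral_ofReal hint
      (Filter.Eventually.of_forall (fun x => hfnn x t ht'.le))]
    congr 1
    rw [heq, integral_sub (hint1.const_mul t) ((integrableOn_exp_mul_cos a ht').const_mul t),
      integral_const_mul, integral_const_mul, laplace_cos a ht']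
    have h0 : ∫ x in Ioi (0:ℝ), Real.exp (-(t*x)) = 1/t := by
      have := laplace_cos 0 ht'
      simp only [zero_mul, Real.cos_zero, mul_one] at this
      rw [this]
      field_simp
      ring
    rw [h0]
    have : t^2 + a^2 ≠ 0 := by positivity
    field_simp
    ring
  -- A3 : Tonelli
  have hmeas : Measurable (Function.uncurry fun x t => ENNReal.ofReal (f x t)) := by
    apply ENNReal.measurable_ofReal.comp
    apply Continuous.measurable
    rw [hf]; fun_prop
  have hswap := lintegral_lintegral_swap (μ := volume.restrict (Ioi (0:ℝ)))
    (ν := volume.restrict (Ioi (0:ℝ))) (f := fun x t => ENNReal.ofReal (f x t))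
    hmeas.aemeasurable
  -- A4 : outer integral over t
  have hintg : IntegrableOn (fun t => a^2/(t^2+a^2)) (Ioi (0:ℝ)) := by
    have hc : Continuous fun t : ℝ => a^2/(t^2+a^2) :=
      continuous_const.div (by fun_prop) (fun t => by positivity)
    apply ((integrable_inv_one_add_sq.const_mul (a^2+1)).restrict (s := Ioi 0)).mono'
      (hc.aestronglyMeasurable.restrict)
    filter_upwards [] with t
    rw [Real.norm_eq_abs, abs_of_nonneg (by positivity)]
    rw [div_le_iff₀ (by positivity), mul_comm (a^2+1), mul_assoc, inv_mul_eq_div,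
      le_div_iff₀ (by positivity)]
    nlinarith [sq_nonneg t, sq_nonneg a, sq_nonneg (a*t)]
  have hA4 : ∫⁻ t in Ioi (0:ℝ), ENNReal.ofReal (a^2/(t^2+a^2)) = ENNReal.ofReal (π/2 * a) := by
    rw [← ofReal_integral_eq_lintegral_ofReal hintg
      (Filter.Eventually.of_forall (fun t => by positivity))]
    congr 1
    have hsub := integral_comp_mul_left_Ioi (fun t => a^2/(t^2+a^2)) 0 ha
    rw [mul_zero] at hsub
    have heq2 : ∀ x : ℝ, a^2/((a*x)^2+a^2) = (1+x^2)⁻¹ := by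
      intro x
      rw [div_eq_iff (by positivity), inv_mul_eq_div, eq_div_iff (by positivity)]
      ring
    simp only [heq2] at hsub
    rw [integral_Ioi_inv_one_add_sq, Real.arctan_zero, sub_zero] at hsub
    -- hsub : π/2 = a⁻¹ • ∫ t in Ioi 0, a^2/(t^2+a^2)
    rw [smul_eq_mul] at hsub
    field_simp at hsub
    linarith
  -- assemble
  have hnn : 0 ≤ᵐ[volume.restrict (Ioi (0:ℝ))] fun x => (1 - Real.cos (a*x))/x^2 := by
    filter_upwards [] with x
    have := Real.cos_le_one (a*x)
    exact div_nonneg (by linarith) (sq_nonneg x)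
  have hm : Measurable fun x : ℝ => (1 - Real.cos (a*x))/x^2 :=
    (measurable_const.sub (Real.measurable_cos.comp (measurable_id.const_mul a))).div
      (measurable_id.pow_const 2)
  have hEL : ∫⁻ x in Ioi (0:ℝ), ENNReal.ofReal ((1 - Real.cos (a*x))/x^2)
      = ENNReal.ofReal (π/2 * a) := by
    calc ∫⁻ x in Ioi (0:ℝ), ENNReal.ofReal ((1 - Real.cos (a*x))/x^2)
        = ∫⁻ x in Ioi (0:ℝ), ∫⁻ t in Ioi (0:ℝ), ENNReal.ofReal (f x t) :=
          (setLIntegral_congr_fun measurableSet_Ioi hA1).symm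
      _ = ∫⁻ t in Ioi (0:ℝ), ∫⁻ x in Ioi (0:ℝ), ENNReal.ofReal (f x t) := hswap
      _ = ∫⁻ t in Ioi (0:ℝ), ENNReal.ofReal (a^2/(t^2+a^2)) :=
          setLIntegral_congr_fun measurableSet_Ioi hA2
      _ = ENNReal.ofReal (π/2 * a) := hA4
  have hIO : IntegrableOn (fun x => (1 - Real.cos (a*x))/x^2) (Ioi (0:ℝ)) := by
    refine ⟨hm.aestronglyMeasurable.restrict, ?_⟩
    rw [hasFiniteIntegral_iff_ofReal hnn, hEL]
    exact ENNReal.ofReal_lt_top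
  refine ⟨hIO, ?_⟩
  rw [integral_eq_lintegral_of_nonneg_ae hnn hm.aestronglyMeasurable.restrict, hEL,
    ENNReal.toReal_ofReal (by positivity)]


lemma key_all (a : ℝ) :
    IntegrableOn (fun x => (1 - Real.cos (x*a))/x^2) (Ioi (0:ℝ)) ∧
    ∫ x in Ioi (0:ℝ), (1 - Real.cos (x*a))/x^2 = π/2 * |a| := by
  have hc : ∀ b : ℝ, 0 < b → (fun x => (1 - Real.cos (x*a))/x^2) = (fun x => (1 - Real.cos (b*x))/x^2) → True := fun _ _ _ => trivial
  rcases lt_trichotomy a 0 with h | h | h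
  · have heq : (fun x => (1 - Real.cos (x*a))/x^2) = fun x => (1 - Real.cos ((-a)*x))/x^2 := by
      funext x; rw [show (-a)*x = -(x*a) by ring, Real.cos_neg]
    rw [heq, abs_of_neg h]
    exact key_pos (neg_pos.mpr h)
  · subst h
    have heq : (fun x : ℝ => (1 - Real.cos (x*0))/x^2) = fun _ : ℝ => (0:ℝ) := by
      funext x; simp
    rw [heq]
    refine ⟨(integrable_zero _ _ _).integrableOn, by simp⟩
  · have heq : (fun x => (1 - Real.cos (x*a))/x^2) = fun x => (1 - Real.cos (a*x))/x^2 := by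
      funext x; rw [mul_comm]
    rw [heq, abs_of_pos h]
    exact key_pos h

/-- the expectation of `|S|` via the characteristic function of `S`. -/
theorem stmt8 {Ω : Type*} [MeasurableSpace Ω] (Q : Measure Ω) [IsProbabilityMeasure Q]
    (S : Ω → ℝ) (hS : Integrable S Q) :
    ∫ ω, |S ω| ∂Q
      = (2 / Real.pi) * ∫ x in Set.Ioi (0 : ℝ),
          (1 - (∫ ω, Complex.exp (Complex.I * x * S ω) ∂Q).re) / x ^ 2 := by
  obtain ⟨S', hS'm, hSS'⟩ : ∃ S', StronglyMeasurable S' ∧ S =ᵐ[Q] S' :=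
    ⟨hS.1.mk S, hS.1.stronglyMeasurable_mk, hS.1.ae_eq_mk⟩
  have hS' : Integrable S' Q := hS.congr hSS'
  have hmS' : Measurable S' := hS'm.measurable
  have hL : ∫ ω, |S ω| ∂Q = ∫ ω, |S' ω| ∂Q :=
    integral_congr_ae (hSS'.mono fun ω h => by simp only [h])
  have hR : ∀ x : ℝ, (∫ ω, Complex.exp (Complex.I * x * S ω) ∂Q)
      = ∫ ω, Complex.exp (Complex.I * x * S' ω) ∂Q := fun x =>
    integral_congr_ae (hSS'.mono fun ω h => by simp only [h])
  rw [hL]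
  simp_rw [hR]
  clear hL hR hSS' hS
  -- integrability facts
  have hcosInt : ∀ x : ℝ, Integrable (fun ω => Real.cos (x * S' ω)) Q := by
    intro x
    apply (integrable_const (1:ℝ)).mono'
      ((Real.measurable_cos.comp (hmS'.const_mul x)).aestronglyMeasurable)
    filter_upwards [] with ω
    rw [Real.norm_eq_abs]
    exact abs_cos_le_one _
  have hexpInt : ∀ x : ℝ, Integrable (fun ω => Complex.exp (Complex.I * x * S' ω)) Q := by
    intro x
    apply (integrable_const (1:ℝ)).mono'
    · apply Continuous.comp_aestronglyMeasurable (by fun_prop)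
      exact (Complex.measurable_ofReal.comp hmS').aestronglyMeasurable.const_mul _
    · filter_upwards [] with ω
      rw [Complex.norm_exp]
      simp
  have hre : ∀ x : ℝ, (∫ ω, Complex.exp (Complex.I * x * S' ω) ∂Q).re
      = ∫ ω, Real.cos (x * S' ω) ∂Q := by
    intro x
    have := integral_re (μ := Q) (f := fun ω => Complex.exp (Complex.I * x * S' ω)) (hexpInt x)
    simp only [RCLike.re_to_complex] at this
    rw [← this]
    congr 1
    funext ω
    have h1 : Complex.I * x * S' ω = ((x * S' ω : ℝ) : ℂ) * Complex.I := by push_cast; ring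
    rw [h1]
    simpa using Complex.exp_ofReal_mul_I_re (x * S' ω)
  have hpoint : ∀ x ∈ Ioi (0:ℝ),
      (1 - (∫ ω, Complex.exp (Complex.I * x * S' ω) ∂Q).re)/x^2
      = ∫ ω, (1 - Real.cos (x * S' ω))/x^2 ∂Q := by
    intro x hx
    rw [hre x]
    have h1 : (1:ℝ) - ∫ ω, Real.cos (x*S' ω) ∂Q = ∫ ω, (1 - Real.cos (x*S' ω)) ∂Q := by
      rw [integral_sub (integrable_const 1) (hcosInt x), integral_const, probReal_univ,
        one_smul]
    rw [h1, ← integral_div]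
  rw [setIntegral_congr_fun measurableSet_Ioi hpoint]
  -- Fubini
  have hFmeas : Measurable (fun p : ℝ × Ω => (1 - Real.cos (p.1 * S' p.2))/p.1^2) :=
    (measurable_const.sub (Real.measurable_cos.comp
      (measurable_fst.mul (hmS'.comp measurable_snd)))).div (measurable_fst.pow_const 2)
  have hQint : ∀ x : ℝ, x ∈ Ioi (0:ℝ) → Integrable (fun ω => (1 - Real.cos (x*S' ω))/x^2) Q := by
    intro x hx
    have hx' : (0:ℝ) < x := hx
    apply (integrable_const (2/x^2)).mono'
      ((measurable_const.sub ((hmS'.const_mul x).cos)).div_const _).aestronglyMeasurable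
    filter_upwards [] with ω
    simp only [Pi.sub_apply]
    rw [Real.norm_eq_abs, abs_of_nonneg (div_nonneg
      (by nlinarith [Real.cos_le_one (x*S' ω)]) (sq_nonneg x))]
    gcongr
    nlinarith [Real.neg_one_le_cos (x*S' ω)]
  set g : ℝ → ℝ := fun x => ∫ ω, (1 - Real.cos (x*S' ω))/x^2 ∂Q with hg
  have hinn : ∀ (x : ℝ) (ω : Ω), 0 ≤ (1 - Real.cos (x * S' ω))/x^2 := fun x ω =>
    div_nonneg (by nlinarith [Real.cos_le_one (x*S' ω)]) (sq_nonneg x)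
  have hgnn : 0 ≤ᵐ[volume.restrict (Ioi (0:ℝ))] g :=
    ae_of_all _ fun x => integral_nonneg fun ω => hinn x ω
  have hgmeas : AEStronglyMeasurable g (volume.restrict (Ioi (0:ℝ))) :=
    (hFmeas.stronglyMeasurable.integral_prod_right').aestronglyMeasurable.restrict
  have e3 : ∀ ω, ∫⁻ x in Ioi (0:ℝ), ENNReal.ofReal ((1 - Real.cos (x*S' ω))/x^2)
      = ENNReal.ofReal (π/2 * |S' ω|) := fun ω => by
    rw [← ofReal_integral_eq_lintegral_ofReal (key_all (S' ω)).1
      (ae_of_all _ fun x => hinn x ω), (key_all (S' ω)).2]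
  have hswap := lintegral_lintegral_swap (μ := volume.restrict (Ioi (0:ℝ))) (ν := Q)
    (f := fun x ω => ENNReal.ofReal ((1 - Real.cos (x*S' ω))/x^2))
    ((ENNReal.measurable_ofReal.comp hFmeas).aemeasurable)
  have key2 : ∫ x in Ioi (0:ℝ), g x = π/2 * ∫ ω, |S' ω| ∂Q := by
    rw [integral_eq_lintegral_of_nonneg_ae hgnn hgmeas]
    have e1 : ∫⁻ x in Ioi (0:ℝ), ENNReal.ofReal (g x)
        = ∫⁻ x in Ioi (0:ℝ), ∫⁻ ω, ENNReal.ofReal ((1 - Real.cos (x*S' ω))/x^2) ∂Q :=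
      setLIntegral_congr_fun measurableSet_Ioi (fun x hx => by
        rw [hg]
        rw [← ofReal_integral_eq_lintegral_ofReal (hQint x hx) (ae_of_all _ fun ω => hinn x ω)])
    rw [e1, hswap]
    have e2 : ∫⁻ ω, (∫⁻ x in Ioi (0:ℝ), ENNReal.ofReal ((1 - Real.cos (x*S' ω))/x^2)) ∂Q
        = ENNReal.ofReal (π/2 * ∫ ω, |S' ω| ∂Q) := by
      rw [lintegral_congr fun ω => e3 ω]
      rw [← ofReal_integral_eq_lintegral_ofReal (hS'.abs.const_mul (π/2))
        (ae_of_all _ fun ω => by positivity), integral_const_mul]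
    rw [e2, ENNReal.toReal_ofReal
      (mul_nonneg (by positivity) (integral_nonneg fun ω => abs_nonneg _))]
  rw [key2]
  have hπ : (π:ℝ) ≠ 0 := Real.pi_ne_zero
  field_simp
end
end

section
/- Let Z := min{c, e^{X_τ} − 1} − g/n. Then E_Q[Z] = c − g/n − e^{−λτ} Σ_{m=0}^∞ ( (λτ)^m / m! ) ∫_0^{1+c} Φ( (ln w − γτ − mμ) / √(σ²τ + mδ²) ) dw. -/
open MeasureTheory ProbabilityTheory

noncomputable section

namespace Stmt11

open Real Set
open scoped ENNReal NNReal

variable {Ω : Type*} [MeasurableSpace Ω] {Q : Measure Ω} [IsProbabilityMeasure Q]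

def gpdf (a u x : ℝ) : ℝ := (Real.sqrt (2 * Real.pi * u))⁻¹ * Real.exp (-(x - a) ^ 2 / (2 * u))

lemma gpdf_eq (a : ℝ) {u : ℝ} (hu : 0 ≤ u) (x : ℝ) :
    gaussianPDFReal a u.toNNReal x = gpdf a u x := by
  simp [gaussianPDFReal, gpdf, Real.coe_toNNReal u hu]

lemma gpdf_nonneg (a u x : ℝ) : 0 ≤ gpdf a u x := by
  unfold gpdf; positivity

lemma continuous_gpdf (a u : ℝ) : Continuous (gpdf a u) := by
  unfold gpdf; fun_prop

@[fun_prop]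
lemma measurable_gpdf2 (a u : ℝ) : Measurable (gpdf a u) := (continuous_gpdf a u).measurable

lemma gpdf_le (a : ℝ) {u : ℝ} (hu : 0 ≤ u) (x : ℝ) : gpdf a u x ≤ (Real.sqrt (2 * Real.pi * u))⁻¹ := by
  unfold gpdf
  have h1 : Real.exp (-(x - a) ^ 2 / (2 * u)) ≤ 1 :=
    Real.exp_le_one_iff.mpr
      (div_nonpos_of_nonpos_of_nonneg (neg_nonpos.mpr (sq_nonneg _)) (by linarith))
  calc (Real.sqrt (2 * Real.pi * u))⁻¹ * Real.exp (-(x - a) ^ 2 / (2 * u))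
      ≤ (Real.sqrt (2 * Real.pi * u))⁻¹ * 1 :=
        mul_le_mul_of_nonneg_left h1 (by positivity)
    _ = _ := mul_one _

lemma integrable_gpdf (a : ℝ) {u : ℝ} (hu : 0 ≤ u) : Integrable (gpdf a u) := by
  have h := integrable_gaussianPDFReal a u.toNNReal
  simpa [funext fun x => gpdf_eq a hu x] using h

lemma integral_gpdf (a : ℝ) {u : ℝ} (hu : 0 < u) : ∫ x, gpdf a u x = 1 := by
  have h := integral_gaussianPDFReal_eq_one a (v := u.toNNReal)
    (by simp [Real.toNNReal_eq_zero]; linarith)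
  simpa [funext fun x => gpdf_eq a hu.le x] using h

lemma gpdf_mul (a b : ℝ) {u v : ℝ} (hu : 0 < u) (hv : 0 < v) (x y : ℝ) :
    gpdf a u (x - y) * gpdf b v y
      = gpdf (a + b) (u + v) x * gpdf (b + v * (x - a - b) / (u + v)) (u * v / (u + v)) y := by
  unfold gpdf
  have hπ := Real.pi_pos
  have hc : (Real.sqrt (2 * Real.pi * u))⁻¹ * (Real.sqrt (2 * Real.pi * v))⁻¹
      = (Real.sqrt (2 * Real.pi * (u + v)))⁻¹
        * (Real.sqrt (2 * Real.pi * (u * v / (u + v))))⁻¹ := by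
    rw [← mul_inv, ← mul_inv, ← Real.sqrt_mul (by positivity), ← Real.sqrt_mul (by positivity)]
    congr 2
    field_simp
  have he : Real.exp (-(x - y - a) ^ 2 / (2 * u)) * Real.exp (-(y - b) ^ 2 / (2 * v))
      = Real.exp (-(x - (a + b)) ^ 2 / (2 * (u + v)))
        * Real.exp (-(y - (b + v * (x - a - b) / (u + v))) ^ 2 / (2 * (u * v / (u + v)))) := by
    rw [← Real.exp_add, ← Real.exp_add]
    congr 1
    field_simp
    ring
  calc (Real.sqrt (2 * Real.pi * u))⁻¹ * Real.exp (-(x - y - a) ^ 2 / (2 * u))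
        * ((Real.sqrt (2 * Real.pi * v))⁻¹ * Real.exp (-(y - b) ^ 2 / (2 * v)))
      = (Real.sqrt (2 * Real.pi * u))⁻¹ * (Real.sqrt (2 * Real.pi * v))⁻¹
        * (Real.exp (-(x - y - a) ^ 2 / (2 * u)) * Real.exp (-(y - b) ^ 2 / (2 * v))) := by ring
    _ = _ := by rw [hc, he]; ring

lemma gpdf_conv (a b : ℝ) {u v : ℝ} (hu : 0 < u) (hv : 0 < v) (x : ℝ) :
    ∫ y, gpdf a u (x - y) * gpdf b v y = gpdf (a + b) (u + v) x := by
  simp_rw [gpdf_mul a b hu hv x]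
  rw [integral_const_mul, integral_gpdf _ (by positivity), mul_one]

lemma stdNormCDF_eq (y : ℝ) : stdNormCDF y = ∫ u in Set.Iic y, gpdf 0 1 u := by
  unfold stdNormCDF gpdf
  norm_num

lemma stdNormCDF_nonneg (y : ℝ) : 0 ≤ stdNormCDF y := by
  rw [stdNormCDF_eq]
  exact setIntegral_nonneg measurableSet_Iic fun x _ => gpdf_nonneg 0 1 x

lemma stdNormCDF_le_one (y : ℝ) : stdNormCDF y ≤ 1 := by
  rw [stdNormCDF_eq]
  calc ∫ u in Set.Iic y, gpdf 0 1 u ≤ ∫ x, gpdf 0 1 x :=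
        setIntegral_le_integral (integrable_gpdf 0 zero_le_one)
          (Filter.Eventually.of_forall fun x => gpdf_nonneg 0 1 x)
    _ = 1 := integral_gpdf 0 one_pos

lemma monotone_stdNormCDF : Monotone stdNormCDF := by
  intro y y' h
  rw [stdNormCDF_eq, stdNormCDF_eq]
  apply setIntegral_mono_set ((integrable_gpdf 0 zero_le_one).integrableOn)
    (Filter.Eventually.of_forall fun x => gpdf_nonneg 0 1 x)
  exact HasSubset.Subset.eventuallyLE (Set.Iic_subset_Iic.mpr h)

lemma measurable_stdNormCDF : Measurable stdNormCDF :=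
  monotone_stdNormCDF.measurable

lemma gaussianReal_Iic {m v : ℝ} (hv : 0 < v) (x : ℝ) :
    gaussianReal m v.toNNReal (Set.Iic x)
      = ENNReal.ofReal (stdNormCDF ((x - m) / Real.sqrt v)) := by
  have hs : (0:ℝ) < Real.sqrt v := Real.sqrt_pos.mpr hv
  have hmap : gaussianReal m v.toNNReal
      = (gaussianReal 0 1).map (fun z => Real.sqrt v * z + m) := by
    have h1 : (gaussianReal 0 1).map (fun z => Real.sqrt v * z)
        = gaussianReal 0 v.toNNReal := by
      have := gaussianReal_map_const_mul (μ := 0) (v := 1) (Real.sqrt v)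
      simp only [mul_zero] at this
      rw [show (fun z => Real.sqrt v * z) = (Real.sqrt v * ·) from rfl, this]
      congr 1
      ext
      simp [Real.sq_sqrt hv.le, Real.coe_toNNReal _ hv.le]
    have h2 : (fun z => Real.sqrt v * z + m)
        = (fun z => z + m) ∘ (fun z => Real.sqrt v * z) := rfl
    rw [h2, ← Measure.map_map (measurable_id'.add_const m)
      (measurable_id'.const_mul _), h1, gaussianReal_map_add_const, zero_add]
  rw [hmap, Measure.map_apply (by fun_prop) measurableSet_Iic]
  have hpre : (fun z => Real.sqrt v * z + m) ⁻¹' Set.Iic x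
      = Set.Iic ((x - m) / Real.sqrt v) := by
    ext z
    simp only [Set.mem_preimage, Set.mem_Iic]
    rw [le_div_iff₀ hs]
    constructor <;> intro <;> linarith [mul_comm z (Real.sqrt v)]
  rw [hpre, gaussianReal_apply_eq_integral 0 (by norm_num) _]
  congr 1
  rw [stdNormCDF_eq]
  refine setIntegral_congr_fun measurableSet_Iic fun t _ => ?_
  rw [← gpdf_eq 0 zero_le_one t, Real.toNNReal_one]

lemma gpdf_shift (b x z v : ℝ) : gpdf (b + x) v z = gpdf b v (z - x) := by
  unfold gpdf
  ring_nf

lemma gaussianReal_apply_gpdf {m v : ℝ} (hv : 0 < v) (s : Set ℝ) :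
    gaussianReal m v.toNNReal s = ∫⁻ z in s, ENNReal.ofReal (gpdf m v z) := by
  have hv' : v.toNNReal ≠ 0 := by simp [Real.toNNReal_eq_zero]; linarith
  rw [gaussianReal_apply m hv' s]
  refine lintegral_congr fun z => ?_
  rw [gaussianPDF, gpdf_eq m hv.le z]

lemma lintegral_ofReal_gpdf_conv (a b : ℝ) {u v : ℝ} (hu : 0 < u) (hv : 0 < v) (z : ℝ) :
    ∫⁻ x, ENNReal.ofReal (gpdf a u x) * ENNReal.ofReal (gpdf b v (z - x))
      = ENNReal.ofReal (gpdf (a + b) (u + v) z) := by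
  have hint : Integrable (fun x => gpdf b v (z - x) * gpdf a u x) := by
    apply Integrable.bdd_mul (c := (Real.sqrt (2 * Real.pi * v))⁻¹) (integrable_gpdf a hu.le)
      ((continuous_gpdf b v).comp (by fun_prop)).aestronglyMeasurable
    exact Filter.Eventually.of_forall fun x => by
      show ‖gpdf b v (z - x)‖ ≤ _
      rw [Real.norm_eq_abs, abs_of_nonneg (gpdf_nonneg _ _ _)]
      exact gpdf_le b hv.le _
  calc ∫⁻ x, ENNReal.ofReal (gpdf a u x) * ENNReal.ofReal (gpdf b v (z - x))
      = ∫⁻ x, ENNReal.ofReal (gpdf b v (z - x) * gpdf a u x) := by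
        refine lintegral_congr fun x => ?_
        rw [← ENNReal.ofReal_mul (gpdf_nonneg _ _ _), mul_comm]
    _ = ENNReal.ofReal (∫ x, gpdf b v (z - x) * gpdf a u x) :=
        (ofReal_integral_eq_lintegral_ofReal hint
          (Filter.Eventually.of_forall fun x =>
            mul_nonneg (gpdf_nonneg _ _ _) (gpdf_nonneg _ _ _))).symm
    _ = ENNReal.ofReal (gpdf (a + b) (u + v) z) := by
        rw [gpdf_conv b a hv hu z, add_comm b a, add_comm v u]

lemma map_add_gauss {A B : Ω → ℝ} (hA : Measurable A) (hB : Measurable B)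
    (hAB : IndepFun A B Q) {a b u v : ℝ} (hu : 0 < u) (hv : 0 < v)
    (ha : Q.map A = gaussianReal a u.toNNReal) (hb : Q.map B = gaussianReal b v.toNNReal) :
    Q.map (fun ω => A ω + B ω) = gaussianReal (a + b) (u + v).toNNReal := by
  have hprod : Q.map (fun ω => (A ω, B ω))
      = (gaussianReal a u.toNNReal).prod (gaussianReal b v.toNNReal) := by
    rw [← ha, ← hb]
    exact (indepFun_iff_map_prod_eq_prod_map_map hA.aemeasurable hB.aemeasurable).mp hAB
  have hcomp : Q.map (fun ω => A ω + B ω)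
      = ((gaussianReal a u.toNNReal).prod (gaussianReal b v.toNNReal)).map
          (fun p : ℝ × ℝ => p.1 + p.2) := by
    rw [← hprod, Measure.map_map measurable_add (hA.prodMk hB)]
    rfl
  rw [hcomp]
  ext s hs
  rw [Measure.map_apply measurable_add hs, Measure.prod_apply (measurable_add hs)]
  have hmeas2 : Measurable (Function.uncurry fun x z =>
      ENNReal.ofReal (gpdf a u x) * ENNReal.ofReal (gpdf b v (z - x))) := by
    apply Measurable.mul (f := fun p : ℝ × ℝ => ENNReal.ofReal (gpdf a u p.1))
      (g := fun p : ℝ × ℝ => ENNReal.ofReal (gpdf b v (p.2 - p.1)))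
    · exact (ENNReal.measurable_ofReal.comp
        ((continuous_gpdf a u).measurable.comp measurable_fst))
    · exact (ENNReal.measurable_ofReal.comp
        ((continuous_gpdf b v).measurable.comp (by fun_prop)))
  calc ∫⁻ x, (gaussianReal b v.toNNReal)
          (Prod.mk x ⁻¹' ((fun p : ℝ × ℝ => p.1 + p.2) ⁻¹' s)) ∂(gaussianReal a u.toNNReal)
      = ∫⁻ x, ∫⁻ z in s, ENNReal.ofReal (gpdf b v (z - x)) ∂volume
          ∂(gaussianReal a u.toNNReal) := by
        refine lintegral_congr fun x => ?_
        have hpre : Prod.mk x ⁻¹' ((fun p : ℝ × ℝ => p.1 + p.2) ⁻¹' s)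
            = (fun y => x + y) ⁻¹' s := rfl
        rw [hpre, ← Measure.map_apply (measurable_const_add x) hs,
          gaussianReal_map_const_add, gaussianReal_apply_gpdf hv s]
        refine lintegral_congr fun z => ?_
        rw [show b + x = b + x from rfl, gpdf_shift]
    _ = ∫⁻ x, ENNReal.ofReal (gpdf a u x)
          * ∫⁻ z in s, ENNReal.ofReal (gpdf b v (z - x)) ∂volume ∂volume := by
        rw [gaussianReal_of_var_ne_zero _ (by simp [Real.toNNReal_eq_zero]; linarith : u.toNNReal ≠ 0),
          lintegral_withDensity_eq_lintegral_mul _ (measurable_gaussianPDF a u.toNNReal)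
            (Measurable.lintegral_prod_right (f := fun x z => ENNReal.ofReal (gpdf b v (z - x))) (by fun_prop))]
        refine lintegral_congr fun x => ?_
        show gaussianPDF a u.toNNReal x * _ = _
        rw [show gaussianPDF a u.toNNReal x = ENNReal.ofReal (gaussianPDFReal a u.toNNReal x) from rfl,
          gpdf_eq a hu.le x]
    _ = ∫⁻ x, ∫⁻ z in s, ENNReal.ofReal (gpdf a u x)
          * ENNReal.ofReal (gpdf b v (z - x)) ∂volume ∂volume := by
        refine lintegral_congr fun x => ?_
        rw [← lintegral_const_mul _ (by fun_prop)]
    _ = ∫⁻ z in s, ∫⁻ x, ENNReal.ofReal (gpdf a u x)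
          * ENNReal.ofReal (gpdf b v (z - x)) ∂volume ∂volume := by
        exact lintegral_lintegral_swap hmeas2.aemeasurable
    _ = ∫⁻ z in s, ENNReal.ofReal (gpdf (a + b) (u + v) z) ∂volume := by
        refine lintegral_congr fun z => lintegral_ofReal_gpdf_conv a b hu hv z
    _ = gaussianReal (a + b) (u + v).toNNReal s :=
        (gaussianReal_apply_gpdf (by linarith) s).symm

section Main

variable {W : Ω → ℝ} {N : Ω → ℕ} {Y : ℕ → Ω → ℝ}

lemma jdfam_measurable (hmW : Measurable W) (hmN : Measurable N)
    (hmY : ∀ j, Measurable (Y j)) : ∀ i, Measurable (JDFam W N Y i) := by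
  intro i
  match i with
  | Sum.inl _ => exact hmW
  | Sum.inr (Sum.inl _) => exact hmN
  | Sum.inr (Sum.inr j) => exact hmY j

lemma indep_sum_Y (hIndep : iIndepFun (m := JDTy.instMeasurableSpace) (JDFam W N Y) Q)
    (hmW : Measurable W) (hmN : Measurable N) (hmY : ∀ j, Measurable (Y j))
    (σ : ℝ) (m : ℕ) :
    IndepFun (fun ω => σ * W ω + ∑ j ∈ Finset.range m, Y j ω) (Y m) Q := by
  classical
  set S : Finset (Unit ⊕ Unit ⊕ ℕ) :=
    insert (Sum.inl ()) ((Finset.range m).image (fun j => Sum.inr (Sum.inr j))) with hS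
  set T : Finset (Unit ⊕ Unit ⊕ ℕ) := {Sum.inr (Sum.inr m)} with hT
  have hST : Disjoint S T := by
    rw [Finset.disjoint_right]
    intro i hiT hiS
    rw [hT, Finset.mem_singleton] at hiT
    subst hiT
    rw [hS, Finset.mem_insert] at hiS
    rcases hiS with h | h
    · exact absurd h (by simp)
    · rw [Finset.mem_image] at h
      obtain ⟨j, hj, hj2⟩ := h
      rw [Finset.mem_range] at hj
      have : j = m := by
        injection hj2 with h'
        injection h' 
      omega
  have h := hIndep.indepFun_finset S T hST (jdfam_measurable hmW hmN hmY)
  have hmemW : Sum.inl () ∈ S := Finset.mem_insert_self _ _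
  have hmemY : ∀ j ∈ Finset.range m, Sum.inr (Sum.inr j) ∈ S := fun j hj =>
    Finset.mem_insert_of_mem (Finset.mem_image_of_mem _ hj)
  let φ : ((i : S) → JDTy i) → ℝ := fun p =>
    σ * (id (p ⟨Sum.inl (), hmemW⟩) : ℝ)
      + ∑ j ∈ (Finset.range m).attach, (id (p ⟨Sum.inr (Sum.inr j.1), hmemY j.1 j.2⟩) : ℝ)
  let ψ : ((i : T) → JDTy i) → ℝ := fun p =>
    p ⟨Sum.inr (Sum.inr m), Finset.mem_singleton_self _⟩
  have hφ : Measurable φ := by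
    refine Measurable.add (Measurable.const_mul ?_ σ)
      (Finset.measurable_sum _ fun j _ => ?_) <;> exact measurable_pi_apply _
  have hψ : Measurable ψ := measurable_pi_apply _
  have h2 := h.comp hφ hψ
  have e1 : (φ ∘ fun a (i : S) => JDFam W N Y i a)
      = fun ω => σ * W ω + ∑ j ∈ Finset.range m, Y j ω := by
    funext ω
    show σ * W ω + ∑ j ∈ (Finset.range m).attach, Y j.1 ω = _
    rw [Finset.sum_attach (Finset.range m) (fun j => Y j ω)]
  have e2 : (ψ ∘ fun a (i : T) => JDFam W N Y i a) = Y m := rfl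
  rwa [e1, e2] at h2

lemma indep_N_G (hIndep : iIndepFun (m := JDTy.instMeasurableSpace) (JDFam W N Y) Q)
    (hmW : Measurable W) (hmN : Measurable N) (hmY : ∀ j, Measurable (Y j))
    (γ tau σ : ℝ) (m : ℕ) :
    IndepFun N (fun ω => γ * tau + σ * W ω + ∑ j ∈ Finset.range m, Y j ω) Q := by
  classical
  set S : Finset (Unit ⊕ Unit ⊕ ℕ) := {Sum.inr (Sum.inl ())} with hS
  set T : Finset (Unit ⊕ Unit ⊕ ℕ) :=
    insert (Sum.inl ()) ((Finset.range m).image (fun j => Sum.inr (Sum.inr j))) with hT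
  have hST : Disjoint S T := by
    rw [Finset.disjoint_left]
    intro i hiS hiT
    rw [hS, Finset.mem_singleton] at hiS
    subst hiS
    rw [hT, Finset.mem_insert] at hiT
    rcases hiT with h | h
    · exact absurd h (by simp)
    · rw [Finset.mem_image] at h
      obtain ⟨j, _, hj2⟩ := h
      injection hj2 with h'
      injection h'
  have h := hIndep.indepFun_finset S T hST (jdfam_measurable hmW hmN hmY)
  have hmemW : Sum.inl () ∈ T := Finset.mem_insert_self _ _
  have hmemY : ∀ j ∈ Finset.range m, Sum.inr (Sum.inr j) ∈ T := fun j hj =>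
    Finset.mem_insert_of_mem (Finset.mem_image_of_mem _ hj)
  let φ : ((i : S) → JDTy i) → ℕ := fun p =>
    p ⟨Sum.inr (Sum.inl ()), Finset.mem_singleton_self _⟩
  let ψ : ((i : T) → JDTy i) → ℝ := fun p =>
    γ * tau + σ * (id (p ⟨Sum.inl (), hmemW⟩) : ℝ)
      + ∑ j ∈ (Finset.range m).attach, (id (p ⟨Sum.inr (Sum.inr j.1), hmemY j.1 j.2⟩) : ℝ)
  have hφ : Measurable φ := measurable_pi_apply _
  have hψ : Measurable ψ := by
    refine Measurable.add (Measurable.const_add (Measurable.const_mul ?_ σ) (γ * tau))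
      (Finset.measurable_sum _ fun j _ => ?_) <;> exact measurable_pi_apply _
  have h2 := h.comp hφ hψ
  have e1 : (φ ∘ fun a (i : S) => JDFam W N Y i a) = N := rfl
  have e2 : (ψ ∘ fun a (i : T) => JDFam W N Y i a)
      = fun ω => γ * tau + σ * W ω + ∑ j ∈ Finset.range m, Y j ω := by
    funext ω
    show γ * tau + σ * W ω + ∑ j ∈ (Finset.range m).attach, Y j.1 ω = _
    rw [Finset.sum_attach (Finset.range m) (fun j => Y j ω)]
  rwa [e1, e2] at h2

end Main

section Laws

variable {W : Ω → ℝ} {N : Ω → ℕ} {Y : ℕ → Ω → ℝ}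
variable {γ μ σ δ lam tau : ℝ}

lemma law_T (hIndep : iIndepFun (m := JDTy.instMeasurableSpace) (JDFam W N Y) Q)
    (hmW : Measurable W) (hmN : Measurable N) (hmY : ∀ j, Measurable (Y j))
    (hW : Q.map W = gaussianReal 0 tau.toNNReal)
    (hY : ∀ j, Q.map (Y j) = gaussianReal μ (δ ^ 2).toNNReal)
    (hσ : 0 < σ) (hδ : 0 < δ) (htau : 0 < tau) (m : ℕ) :
    Q.map (fun ω => σ * W ω + ∑ j ∈ Finset.range m, Y j ω)
      = gaussianReal (m * μ) (σ ^ 2 * tau + m * δ ^ 2).toNNReal := by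
  induction m with
  | zero =>
    have he : (fun ω => σ * W ω + ∑ j ∈ Finset.range 0, Y j ω) = fun ω => σ * W ω := by
      funext ω; simp
    rw [he, show (fun ω => σ * W ω) = (fun x => σ * x) ∘ W from rfl,
      ← Measure.map_map (measurable_id'.const_mul σ) hmW, hW, gaussianReal_map_const_mul]
    norm_num
    congr 1
    ext
    simp [Real.coe_toNNReal tau htau.le, Real.coe_toNNReal _ (by positivity : (0:ℝ) ≤ σ^2 * tau)]
  | succ m ih =>
    have he : (fun ω => σ * W ω + ∑ j ∈ Finset.range (m + 1), Y j ω)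
        = fun ω => (σ * W ω + ∑ j ∈ Finset.range m, Y j ω) + Y m ω := by
      funext ω
      rw [Finset.sum_range_succ]
      ring
    rw [he]
    have hmT : Measurable (fun ω => σ * W ω + ∑ j ∈ Finset.range m, Y j ω) := by
      exact (hmW.const_mul σ).add (Finset.measurable_sum _ fun j _ => hmY j)
    have hvpos : (0:ℝ) < σ ^ 2 * tau + m * δ ^ 2 := by positivity
    have h := map_add_gauss hmT (hmY m) (indep_sum_Y hIndep hmW hmN hmY σ m)
      hvpos (by positivity : (0:ℝ) < δ ^ 2) ih (hY m)
    rw [h]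
    congr 1
    · push_cast; ring
    · congr 1; push_cast; ring

lemma law_G (hIndep : iIndepFun (m := JDTy.instMeasurableSpace) (JDFam W N Y) Q)
    (hmW : Measurable W) (hmN : Measurable N) (hmY : ∀ j, Measurable (Y j))
    (hW : Q.map W = gaussianReal 0 tau.toNNReal)
    (hY : ∀ j, Q.map (Y j) = gaussianReal μ (δ ^ 2).toNNReal)
    (hσ : 0 < σ) (hδ : 0 < δ) (htau : 0 < tau) (γ : ℝ) (m : ℕ) :
    Q.map (fun ω => γ * tau + σ * W ω + ∑ j ∈ Finset.range m, Y j ω)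
      = gaussianReal (m * μ + γ * tau) (σ ^ 2 * tau + m * δ ^ 2).toNNReal := by
  have he : (fun ω => γ * tau + σ * W ω + ∑ j ∈ Finset.range m, Y j ω)
      = (fun x => γ * tau + x) ∘ (fun ω => σ * W ω + ∑ j ∈ Finset.range m, Y j ω) := by
    funext ω; show _ = γ * tau + _; ring
  have hmT : Measurable (fun ω => σ * W ω + ∑ j ∈ Finset.range m, Y j ω) :=
    (hmW.const_mul σ).add (Finset.measurable_sum _ fun j _ => hmY j)
  rw [he, ← Measure.map_map (measurable_const_add (γ * tau)) hmT,
    law_T hIndep hmW hmN hmY hW hY hσ hδ htau m, gaussianReal_map_const_add]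

lemma Q_G_le (hIndep : iIndepFun (m := JDTy.instMeasurableSpace) (JDFam W N Y) Q)
    (hmW : Measurable W) (hmN : Measurable N) (hmY : ∀ j, Measurable (Y j))
    (hW : Q.map W = gaussianReal 0 tau.toNNReal)
    (hY : ∀ j, Q.map (Y j) = gaussianReal μ (δ ^ 2).toNNReal)
    (hσ : 0 < σ) (hδ : 0 < δ) (htau : 0 < tau) (γ : ℝ) (m : ℕ) (x : ℝ) :
    Q {ω | γ * tau + σ * W ω + ∑ j ∈ Finset.range m, Y j ω ≤ x}
      = ENNReal.ofReal (stdNormCDF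
          ((x - γ * tau - m * μ) / Real.sqrt (σ ^ 2 * tau + m * δ ^ 2))) := by
  have hmG : Measurable (fun ω => γ * tau + σ * W ω + ∑ j ∈ Finset.range m, Y j ω) :=
    (((hmW.const_mul σ).const_add (γ * tau)).add (Finset.measurable_sum _ fun j _ => hmY j))
  have hset : {ω | γ * tau + σ * W ω + ∑ j ∈ Finset.range m, Y j ω ≤ x}
      = (fun ω => γ * tau + σ * W ω + ∑ j ∈ Finset.range m, Y j ω) ⁻¹' Set.Iic x := rfl
  rw [hset, ← Measure.map_apply hmG measurableSet_Iic,
    law_G hIndep hmW hmN hmY hW hY hσ hδ htau γ m,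
    gaussianReal_Iic (by positivity : (0:ℝ) < σ ^ 2 * tau + m * δ ^ 2)]
  congr 2
  ring

lemma measurable_nat_dep {F : ℕ → Ω → ℝ} (hF : ∀ m, Measurable (F m)) {N : Ω → ℕ}
    (hN : Measurable N) : Measurable fun ω => F (N ω) ω := by
  intro s hs
  have : (fun ω => F (N ω) ω) ⁻¹' s = ⋃ m, N ⁻¹' {m} ∩ F m ⁻¹' s := by
    ext ω
    simp only [Set.mem_preimage, Set.mem_iUnion, Set.mem_inter_iff, Set.mem_singleton_iff]
    exact ⟨fun h => ⟨N ω, rfl, h⟩, fun ⟨m, hm, h⟩ => by rw [← hm] at h; exact h⟩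
  rw [this]
  exact MeasurableSet.iUnion fun m =>
    (hN (measurableSet_singleton m)).inter (hF m hs)

lemma cdf_X (hIndep : iIndepFun (m := JDTy.instMeasurableSpace) (JDFam W N Y) Q)
    (hmW : Measurable W) (hmN : Measurable N) (hmY : ∀ j, Measurable (Y j))
    (hW : Q.map W = gaussianReal 0 tau.toNNReal)
    (hN : Q.map N = poissonMeasure (lam * tau).toNNReal)
    (hY : ∀ j, Q.map (Y j) = gaussianReal μ (δ ^ 2).toNNReal)
    (hσ : 0 < σ) (hδ : 0 < δ) (htau : 0 < tau) (γ : ℝ) (x : ℝ) :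
    Q {ω | γ * tau + σ * W ω + ∑ j ∈ Finset.range (N ω), Y j ω ≤ x}
      = ∑' m : ℕ, ENNReal.ofReal (poissonPMFReal (lam * tau).toNNReal m)
          * ENNReal.ofReal (stdNormCDF
              ((x - γ * tau - m * μ) / Real.sqrt (σ ^ 2 * tau + m * δ ^ 2))) := by
  have hdec : {ω | γ * tau + σ * W ω + ∑ j ∈ Finset.range (N ω), Y j ω ≤ x}
      = ⋃ m, (N ⁻¹' {m}
          ∩ {ω | γ * tau + σ * W ω + ∑ j ∈ Finset.range m, Y j ω ≤ x}) := by
    ext ω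
    simp only [Set.mem_setOf_eq, Set.mem_iUnion, Set.mem_inter_iff, Set.mem_preimage,
      Set.mem_singleton_iff]
    constructor
    · intro h
      exact ⟨N ω, rfl, h⟩
    · rintro ⟨m, hm, h⟩
      rw [← hm] at h
      exact h
  have hmG : ∀ m : ℕ, Measurable (fun ω => γ * tau + σ * W ω + ∑ j ∈ Finset.range m, Y j ω) :=
    fun m => (((hmW.const_mul σ).const_add (γ * tau)).add
      (Finset.measurable_sum _ fun j _ => hmY j))
  rw [hdec, measure_iUnion]
  · refine tsum_congr fun m => ?_
    have hind := (indep_N_G hIndep hmW hmN hmY γ tau σ m).measure_inter_preimage_eq_mul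
      {m} (Set.Iic x) (measurableSet_singleton m) measurableSet_Iic
    have : N ⁻¹' {m} ∩ {ω | γ * tau + σ * W ω + ∑ j ∈ Finset.range m, Y j ω ≤ x}
        = N ⁻¹' {m} ∩ (fun ω => γ * tau + σ * W ω + ∑ j ∈ Finset.range m, Y j ω) ⁻¹'
          Set.Iic x := rfl
    rw [this, hind]
    congr 1
    · rw [← Measure.map_apply hmN (measurableSet_singleton m), hN,
        poissonMeasure_singleton]
      rfl
    · exact Q_G_le hIndep hmW hmN hmY hW hY hσ hδ htau γ m x
  · intro m m' hmm'
    simp only [Function.onFun, Set.disjoint_left]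
    rintro ω ⟨h1, _⟩ ⟨h2, _⟩
    exact hmm' (h1.symm.trans h2)
  · intro m
    exact (hmN (measurableSet_singleton m)).inter ((hmG m) measurableSet_Iic)

end Laws

lemma ofReal_max_zero (a : ℝ) : ENNReal.ofReal (max 0 a) = ENNReal.ofReal a := by
  rcases le_total a 0 with h | h
  · rw [max_eq_left h, ENNReal.ofReal_zero, ENNReal.ofReal_of_nonpos h]
  · rw [max_eq_right h]

lemma min_eq_sub_max (c t : ℝ) : min c (t - 1) = c - max 0 (1 + c - t) := by
  rcases le_total (t - 1) c with h | h
  · rw [min_eq_right h, max_eq_right (by linarith)]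
    ring
  · rw [min_eq_left h, max_eq_left (by linarith)]
    ring

section MainCalc

variable {W : Ω → ℝ} {N : Ω → ℕ} {Y : ℕ → Ω → ℝ}
variable {μ σ δ lam tau : ℝ}

lemma main_meas (hIndep : iIndepFun (m := JDTy.instMeasurableSpace) (JDFam W N Y) Q)
    (hmW : Measurable W) (hmN : Measurable N) (hmY : ∀ j, Measurable (Y j))
    (hW : Q.map W = gaussianReal 0 tau.toNNReal)
    (hN : Q.map N = poissonMeasure (lam * tau).toNNReal)
    (hY : ∀ j, Q.map (Y j) = gaussianReal μ (δ ^ 2).toNNReal)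
    (hσ : 0 < σ) (hδ : 0 < δ) (hlam : 0 < lam) (htau : 0 < tau)
    (γ : ℝ) (c : ℝ) (hc : 0 ≤ c) (gn : ℝ) :
    ∫ ω, (min c (Real.exp (γ * tau + σ * W ω + ∑ j ∈ Finset.range (N ω), Y j ω) - 1)
        - gn) ∂Q
      = c - gn - Real.exp (-(lam * tau)) * ∑' m : ℕ,
          (lam * tau) ^ m / (m.factorial : ℝ) *
            ∫ w in Set.Ioc (0 : ℝ) (1 + c),
              stdNormCDF ((Real.log w - γ * tau - m * μ)
                / Real.sqrt (σ ^ 2 * tau + m * δ ^ 2)) := by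
  have hr : ((lam * tau).toNNReal : ℝ) = lam * tau :=
    Real.coe_toNNReal _ (by positivity)
  set X' : Ω → ℝ := fun ω => γ * tau + σ * W ω + ∑ j ∈ Finset.range (N ω), Y j ω with hX'
  have hmG : ∀ m : ℕ, Measurable (fun ω => γ * tau + σ * W ω + ∑ j ∈ Finset.range m, Y j ω) :=
    fun m => (((hmW.const_mul σ).const_add (γ * tau)).add
      (Finset.measurable_sum _ fun j _ => hmY j))
  have hmX : Measurable X' :=
    measurable_nat_dep (F := fun m ω => γ * tau + σ * W ω + ∑ j ∈ Finset.range m, Y j ω)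
      hmG hmN
  set h : Ω → ℝ := fun ω => max 0 (1 + c - Real.exp (X' ω)) with hh
  have hmh : Measurable h :=
    measurable_const.max (measurable_const.sub (Real.measurable_exp.comp hmX))
  have hnn : ∀ ω, 0 ≤ h ω := fun ω => le_max_left _ _
  have hbd : ∀ ω, h ω ≤ 1 + c := fun ω =>
    max_le (by linarith) (by have := Real.exp_pos (X' ω); linarith)
  have h_int : Integrable h Q := by
    refine Integrable.mono' (integrable_const (1 + c)) hmh.aestronglyMeasurable
      (Filter.Eventually.of_forall fun ω => ?_)
    rw [Real.norm_eq_abs, abs_of_nonneg (hnn ω)]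
    exact hbd ω
  have hfun : (fun ω => min c (Real.exp (γ * tau + σ * W ω
        + ∑ j ∈ Finset.range (N ω), Y j ω) - 1) - gn)
      = fun ω => (c - gn) - h ω := by
    funext ω
    rw [hh]
    show min c (Real.exp (X' ω) - 1) - gn = _
    rw [min_eq_sub_max c (Real.exp (X' ω))]
    ring
  rw [hfun, integral_sub (integrable_const _) h_int, integral_const, probReal_univ]
  simp only [ENNReal.toReal_one, one_smul]
  set E : Set (Ω × ℝ) := {p : Ω × ℝ | X' p.1 ≤ Real.log p.2} with hE
  have hEm : MeasurableSet E :=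
    measurableSet_le (hmX.comp measurable_fst) (Real.measurable_log.comp measurable_snd)
  set J : ℕ → ℝ := fun m => ∫ w in Set.Ioc (0 : ℝ) (1 + c),
      stdNormCDF ((Real.log w - γ * tau - m * μ) / Real.sqrt (σ ^ 2 * tau + m * δ ^ 2))
    with hJ
  haveI hfin : IsFiniteMeasure (volume.restrict (Set.Ioc (0:ℝ) (1 + c))) :=
    ⟨by rw [Measure.restrict_apply MeasurableSet.univ, Set.univ_inter, Real.volume_Ioc]
        exact ENNReal.ofReal_lt_top⟩
  have hΦmeas : ∀ m : ℕ, Measurable fun w : ℝ =>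
      stdNormCDF ((Real.log w - γ * tau - m * μ) / Real.sqrt (σ ^ 2 * tau + m * δ ^ 2)) :=
    fun m => measurable_stdNormCDF.comp
      ((((Real.measurable_log.sub measurable_const).sub measurable_const).div measurable_const))
  have hΦint : ∀ m : ℕ, IntegrableOn (fun w : ℝ =>
      stdNormCDF ((Real.log w - γ * tau - m * μ) / Real.sqrt (σ ^ 2 * tau + m * δ ^ 2)))
      (Set.Ioc (0:ℝ) (1 + c)) volume := by
    intro m
    refine Integrable.mono' (integrable_const 1) ((hΦmeas m).aestronglyMeasurable)
      (Filter.Eventually.of_forall fun w => ?_)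
    rw [Real.norm_eq_abs, abs_of_nonneg (stdNormCDF_nonneg _)]
    exact stdNormCDF_le_one _
  have hJnn : ∀ m, 0 ≤ J m := fun m =>
    setIntegral_nonneg measurableSet_Ioc fun w _ => stdNormCDF_nonneg _
  have hcalc : ∫⁻ ω, ENNReal.ofReal (h ω) ∂Q
      = ∑' m : ℕ, ENNReal.ofReal (poissonPMFReal (lam * tau).toNNReal m * J m) := by
    calc ∫⁻ ω, ENNReal.ofReal (h ω) ∂Q
        = ∫⁻ ω, ∫⁻ w in Set.Ioc (0:ℝ) (1 + c), E.indicator 1 (ω, w) ∂volume ∂Q := by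
          refine lintegral_congr fun ω => ?_
          rw [hh]
          show ENNReal.ofReal (max 0 (1 + c - Real.exp (X' ω))) = _
          rw [ofReal_max_zero]
          calc ENNReal.ofReal (1 + c - Real.exp (X' ω))
              = volume (Set.Icc (Real.exp (X' ω)) (1 + c)) := by rw [Real.volume_Icc]
            _ = (volume.restrict (Set.Ioc (0:ℝ) (1 + c))) (Set.Ici (Real.exp (X' ω))) := by
                rw [Measure.restrict_apply measurableSet_Ici]
                congr 1
                ext w
                simp only [Set.mem_Icc, Set.mem_inter_iff, Set.mem_Ici, Set.mem_Ioc]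
                constructor
                · rintro ⟨h1, h2⟩
                  exact ⟨h1, lt_of_lt_of_le (Real.exp_pos _) h1, h2⟩
                · rintro ⟨h1, _, h3⟩
                  exact ⟨h1, h3⟩
            _ = ∫⁻ w in Set.Ioc (0:ℝ) (1 + c), (Set.Ici (Real.exp (X' ω))).indicator 1 w
                  ∂volume := (lintegral_indicator_one measurableSet_Ici).symm
            _ = _ := by
                refine setLIntegral_congr_fun measurableSet_Ioc
                  (fun w hw => ?_)
                have hiff : w ∈ Set.Ici (Real.exp (X' ω)) ↔ (ω, w) ∈ E := by
                  rw [hE]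
                  simp only [Set.mem_Ici, Set.mem_setOf_eq]
                  exact (Real.le_log_iff_exp_le hw.1).symm
                simp only [Set.indicator_apply, Pi.one_apply, hiff]
      _ = ∫⁻ w in Set.Ioc (0:ℝ) (1 + c), ∫⁻ ω, E.indicator 1 (ω, w) ∂Q ∂volume := by
          refine lintegral_lintegral_swap ?_
          have huncurry : Function.uncurry (fun ω (w:ℝ) => E.indicator (1 : Ω × ℝ → ℝ≥0∞) (ω, w))
              = E.indicator 1 := by
            funext p
            rw [Function.uncurry]
          rw [huncurry]
          exact (measurable_one.indicator hEm).aemeasurable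
      _ = ∫⁻ w in Set.Ioc (0:ℝ) (1 + c), Q {ω | X' ω ≤ Real.log w} ∂volume := by
          refine lintegral_congr fun w => ?_
          have hind : (fun ω => E.indicator (1 : Ω × ℝ → ℝ≥0∞) (ω, w))
              = Set.indicator {ω | X' ω ≤ Real.log w} 1 := rfl
          rw [hind, lintegral_indicator_one (measurableSet_le hmX measurable_const)]
      _ = ∫⁻ w in Set.Ioc (0:ℝ) (1 + c),
            ∑' m : ℕ, ENNReal.ofReal (poissonPMFReal (lam * tau).toNNReal m)
              * ENNReal.ofReal (stdNormCDF ((Real.log w - γ * tau - m * μ)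
                  / Real.sqrt (σ ^ 2 * tau + m * δ ^ 2))) ∂volume := by
          refine lintegral_congr fun w => ?_
          exact cdf_X hIndep hmW hmN hmY hW hN hY hσ hδ htau γ (Real.log w)
      _ = ∑' m : ℕ, ∫⁻ w in Set.Ioc (0:ℝ) (1 + c),
            ENNReal.ofReal (poissonPMFReal (lam * tau).toNNReal m)
              * ENNReal.ofReal (stdNormCDF ((Real.log w - γ * tau - m * μ)
                  / Real.sqrt (σ ^ 2 * tau + m * δ ^ 2))) ∂volume := by
          refine lintegral_tsum fun m => ?_
          exact (((hΦmeas m).ennreal_ofReal).const_mul _).aemeasurable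
      _ = ∑' m : ℕ, ENNReal.ofReal (poissonPMFReal (lam * tau).toNNReal m * J m) := by
          refine tsum_congr fun m => ?_
          rw [lintegral_const_mul _ ((hΦmeas m).ennreal_ofReal),
            ← ofReal_integral_eq_lintegral_ofReal (hΦint m)
              (Filter.Eventually.of_forall fun w => stdNormCDF_nonneg _),
            ← ENNReal.ofReal_mul poissonPMFReal_nonneg]
  have key : ∫ ω, h ω ∂Q
      = ∑' m : ℕ, poissonPMFReal (lam * tau).toNNReal m * J m := by
    rw [integral_eq_lintegral_of_nonneg_ae (Filter.Eventually.of_forall hnn)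
      hmh.aestronglyMeasurable, hcalc,
      ENNReal.tsum_toReal_eq fun m => ENNReal.ofReal_ne_top]
    exact tsum_congr fun m => ENNReal.toReal_ofReal
      (mul_nonneg poissonPMFReal_nonneg (hJnn m))
  rw [key]
  have hfinal : ∑' m : ℕ, poissonPMFReal (lam * tau).toNNReal m * J m
      = Real.exp (-(lam * tau)) * ∑' m : ℕ, (lam * tau) ^ m / (m.factorial : ℝ) * J m := by
    rw [← tsum_mul_left]
    refine tsum_congr fun m => ?_
    simp only [poissonPMFReal, hr]
    ring
  rw [hfinal]

end MainCalc

lemma iIndepFun_of_ae_eq {ι : Type*} {β : ι → Type*} {mβ : ∀ i, MeasurableSpace (β i)}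
    {f g : ∀ i, Ω → β i} (h : ∀ i, f i =ᵐ[Q] g i)
    (hf : iIndepFun (m := mβ) f Q) : iIndepFun (m := mβ) g Q := by
  rw [iIndepFun_iff_measure_inter_preimage_eq_mul] at hf ⊢
  intro S sets hsets
  have hall : ∀ᵐ ω ∂Q, ∀ i ∈ S, f i ω = g i ω :=
    (Filter.eventually_all_finset S).mpr fun i _ => h i
  have h1 : Q (⋂ i ∈ S, g i ⁻¹' sets i) = Q (⋂ i ∈ S, f i ⁻¹' sets i) := by
    apply measure_congr
    filter_upwards [hall] with ω hω
    show (ω ∈ ⋂ i ∈ S, g i ⁻¹' sets i) = (ω ∈ ⋂ i ∈ S, f i ⁻¹' sets i)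
    refine propext ?_
    simp only [Set.mem_iInter, Set.mem_preimage]
    exact forall₂_congr fun i hi => by rw [hω i hi]
  have h2 : ∀ i, Q (g i ⁻¹' sets i) = Q (f i ⁻¹' sets i) := by
    intro i
    apply measure_congr
    filter_upwards [h i] with ω hω
    show (ω ∈ g i ⁻¹' sets i) = (ω ∈ f i ⁻¹' sets i)
    simp only [Set.mem_preimage, hω]
  rw [h1, hf S hsets]
  exact Finset.prod_congr rfl fun i _ => (h2 i).symm

end Stmt11

open Stmt11 in
/-- first moment of `Z = min(c, exp (X τ) - 1) - g/n`. -/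
theorem stmt11
    {Ω : Type*} [MeasurableSpace Ω] (Q : Measure Ω) [IsProbabilityMeasure Q]
    (γ μ σ δ lam tau : ℝ) (hσ : 0 < σ) (hδ : 0 < δ) (hlam : 0 < lam) (htau : 0 < tau)
    (W : Ω → ℝ) (N : Ω → ℕ) (Y : ℕ → Ω → ℝ)
    (hW : Measure.map W Q = gaussianReal 0 (tau).toNNReal)
    (hN : Measure.map N Q = poissonMeasure (lam * tau).toNNReal)
    (hY : ∀ j, Measure.map (Y j) Q = gaussianReal μ (δ ^ 2).toNNReal)
    (hIndep : iIndepFun (m := JDTy.instMeasurableSpace) (JDFam W N Y) Q)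
    (X : Ω → ℝ) (hX : ∀ ω, X ω = γ * tau + σ * W ω + ∑ j ∈ Finset.range (N ω), Y j ω)
    (c g : ℝ) (hc : 0 ≤ c) (n : ℕ) (hn : 1 ≤ n)
    (Z : Ω → ℝ) (hZ : ∀ ω, Z ω = min c (Real.exp (X ω) - 1) - g / n)
    : ∫ ω, Z ω ∂Q
      = c - g / n - Real.exp (-(lam * tau)) * ∑' m : ℕ,
          (lam * tau) ^ m / (m.factorial : ℝ) *
            ∫ w in Set.Ioc (0 : ℝ) (1 + c),
              stdNormCDF ((Real.log w - γ * tau - m * μ) / Real.sqrt (σ ^ 2 * tau + m * δ ^ 2)) := by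
  have hWm : AEMeasurable W Q := aemeasurable_of_map_neZero (by rw [hW]; infer_instance)
  have hNm : AEMeasurable N Q := aemeasurable_of_map_neZero (by rw [hN]; infer_instance)
  have hYm : ∀ j, AEMeasurable (Y j) Q := fun j =>
    aemeasurable_of_map_neZero (by rw [hY j]; infer_instance)
  obtain ⟨W₀, hmW₀, haeW⟩ : ∃ W', Measurable W' ∧ W =ᵐ[Q] W' :=
    ⟨hWm.mk W, hWm.measurable_mk, hWm.ae_eq_mk⟩
  obtain ⟨N₀, hmN₀, haeN⟩ : ∃ N', Measurable N' ∧ N =ᵐ[Q] N' :=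
    ⟨hNm.mk N, hNm.measurable_mk, hNm.ae_eq_mk⟩
  obtain ⟨Y₀, hmY₀, haeY⟩ : ∃ Y' : ℕ → Ω → ℝ, (∀ j, Measurable (Y' j))
      ∧ ∀ j, Y j =ᵐ[Q] Y' j :=
    ⟨fun j => (hYm j).mk (Y j), fun j => (hYm j).measurable_mk, fun j => (hYm j).ae_eq_mk⟩
  have hW₀ : Measure.map W₀ Q = gaussianReal 0 (tau).toNNReal := by
    rw [← Measure.map_congr haeW, hW]
  have hN₀ : Measure.map N₀ Q = poissonMeasure (lam * tau).toNNReal := by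
    rw [← Measure.map_congr haeN, hN]
  have hY₀ : ∀ j, Measure.map (Y₀ j) Q = gaussianReal μ (δ ^ 2).toNNReal := fun j => by
    rw [← Measure.map_congr (haeY j), hY j]
  have hfam : ∀ i, JDFam W N Y i =ᵐ[Q] JDFam W₀ N₀ Y₀ i := fun i => by
    match i with
    | Sum.inl _ => exact haeW
    | Sum.inr (Sum.inl _) => exact haeN
    | Sum.inr (Sum.inr j) => exact haeY j
  have hIndep₀ : iIndepFun (m := JDTy.instMeasurableSpace) (JDFam W₀ N₀ Y₀) Q :=
    iIndepFun_of_ae_eq hfam hIndep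
  have hYae : ∀ᵐ ω ∂Q, ∀ j, Y j ω = Y₀ j ω := ae_all_iff.mpr haeY
  have hZae : Z =ᵐ[Q] fun ω =>
      min c (Real.exp (γ * tau + σ * W₀ ω + ∑ j ∈ Finset.range (N₀ ω), Y₀ j ω) - 1)
        - g / n := by
    filter_upwards [haeW, haeN, hYae] with ω h1 h2 h3
    have hsum : ∑ j ∈ Finset.range (N ω), Y j ω
        = ∑ j ∈ Finset.range (N₀ ω), Y₀ j ω := by
      rw [h2]
      exact Finset.sum_congr rfl fun j _ => h3 j
    rw [hZ ω, hX ω, h1, hsum]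
  rw [integral_congr_ae hZae]
  exact main_meas hIndep₀ hmW₀ hmN₀ hmY₀ hW₀ hN₀ hY₀ hσ hδ hlam htau γ c hc (g / n)
end
end
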